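/- arXiv:2302.13723 — 5 statements merged into one kernel-verified Lean document; each statement's English description precedes it below -/
import Mathlib

section
/- Let T > 0 and let h ∈ L¹([0, T/2]) have bounded mean oscillation on [0, T/2], i.e. ‖h‖_{BMO[0,T/2]} := sup{O(h,I) : I ⊆ [0,T/2] a closed interval of positive length} < ∞. Define H : ℝ → ℝ as the even T-periodic extension of h, i.e. H(x) = h(x) for x ∈ [0, T/2], H(−x) = H(x) and H(x + T) = H(x) for all x ∈ ℝ. Then H ∈ BMO(ℝ) and ‖H‖_{BMO(ℝ)} ≤ 10 ‖h‖_{BMO[0,T/2]}. -/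
open MeasureTheory Set Filter
open scoped ENNReal Topology

/-- Mean oscillation of `f` over `A`. -/
noncomputable def osc1 (f : ℝ → ℝ) (A : Set ℝ) : ℝ :=
  ⨍ x in A, |f x - ⨍ y in A, f y|

lemma osc1_nonneg (f : ℝ → ℝ) (A : Set ℝ) : 0 ≤ osc1 f A := by
  rw [osc1, setAverage_eq]
  exact smul_nonneg (by positivity) (integral_nonneg fun x => abs_nonneg _)

lemma osc1_congr {f g : ℝ → ℝ} {A : Set ℝ} (hA : MeasurableSet A) (hfg : EqOn f g A) :
    osc1 f A = osc1 g A := by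
  have h1 : (⨍ y in A, f y) = ⨍ y in A, g y :=
    setAverage_congr_fun hA (ae_of_all _ fun x hx => hfg hx)
  rw [osc1, osc1, h1]
  exact setAverage_congr_fun hA (ae_of_all _ fun x hx => by rw [hfg hx])

lemma osc1_comp {φ : ℝ → ℝ} (hφ : MeasurePreserving φ volume volume)
    (hemb : MeasurableEmbedding φ) (f : ℝ → ℝ) (s : Set ℝ) (hs : MeasurableSet s) :
    osc1 (fun x => f (φ x)) (φ ⁻¹' s) = osc1 f s := by
  have hmeas : volume (φ ⁻¹' s) = volume s := hφ.measure_preimage hs.nullMeasurableSet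
  have inner : (⨍ y in φ ⁻¹' s, f (φ y)) = ⨍ y in s, f y := by
    rw [setAverage_eq, setAverage_eq, measureReal_def, measureReal_def, hmeas, hφ.setIntegral_preimage_emb hemb]
  set c := ⨍ y in s, f y with hc
  rw [osc1, osc1, inner, ← hc]
  rw [setAverage_eq, setAverage_eq, measureReal_def, measureReal_def, hmeas,
    ← hφ.setIntegral_preimage_emb hemb (fun y => |f y - c|) s]

lemma mp_translate (t : ℝ) : MeasurePreserving (fun x : ℝ => x + t) volume volume :=
  measurePreserving_add_right volume t

lemma emb_translate (t : ℝ) : MeasurableEmbedding (fun x : ℝ => x + t) :=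
  (MeasurableEquiv.addRight t).measurableEmbedding

lemma mp_reflect (t : ℝ) : MeasurePreserving (fun x : ℝ => t - x) volume volume := by
  have : (fun x : ℝ => t - x) = (fun x : ℝ => x + t) ∘ (fun x : ℝ => -x) := by
    funext x; simp [sub_eq_neg_add]
  rw [this]
  exact (mp_translate t).comp (Measure.measurePreserving_neg volume)

lemma emb_reflect (t : ℝ) : MeasurableEmbedding (fun x : ℝ => t - x) := by
  have : (fun x : ℝ => t - x) = (fun x : ℝ => x + t) ∘ (fun x : ℝ => -x) := by
    funext x; simp [sub_eq_neg_add]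
  rw [this]
  exact (emb_translate t).comp (MeasurableEquiv.neg ℝ).measurableEmbedding

lemma preimage_translate_Icc (t a b : ℝ) :
    (fun x : ℝ => x + t) ⁻¹' Icc (a + t) (b + t) = Icc a b := by
  ext x; simp only [mem_preimage, mem_Icc]
  constructor <;> intro hx <;> exact ⟨by linarith [hx.1, hx.2], by linarith [hx.1, hx.2]⟩

lemma preimage_reflect_Icc (t a b : ℝ) :
    (fun x : ℝ => t - x) ⁻¹' Icc (t - b) (t - a) = Icc a b := by
  ext x; simp only [mem_preimage, mem_Icc]
  constructor <;> intro hx <;> exact ⟨by linarith [hx.1, hx.2], by linarith [hx.1, hx.2]⟩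

lemma integral_Icc_translate (g : ℝ → ℝ) (t a b : ℝ) :
    ∫ x in Icc a b, g (x + t) = ∫ y in Icc (a + t) (b + t), g y := by
  rw [← preimage_translate_Icc t a b]
  exact (mp_translate t).setIntegral_preimage_emb (emb_translate t) g _

lemma integral_Icc_reflect (g : ℝ → ℝ) (t a b : ℝ) :
    ∫ x in Icc a b, g (t - x) = ∫ y in Icc (t - b) (t - a), g y := by
  rw [← preimage_reflect_Icc t a b]
  exact (mp_reflect t).setIntegral_preimage_emb (emb_reflect t) g _

lemma integrableOn_Icc_translate {g : ℝ → ℝ} {t a b : ℝ}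
    (hg : IntegrableOn g (Icc (a + t) (b + t))) :
    IntegrableOn (fun x => g (x + t)) (Icc a b) := by
  rw [← preimage_translate_Icc t a b]
  exact ((mp_translate t).integrableOn_comp_preimage (emb_translate t)).mpr hg

lemma integrableOn_Icc_reflect {g : ℝ → ℝ} {t a b : ℝ}
    (hg : IntegrableOn g (Icc (t - b) (t - a))) :
    IntegrableOn (fun x => g (t - x)) (Icc a b) := by
  rw [← preimage_reflect_Icc t a b]
  exact ((mp_reflect t).integrableOn_comp_preimage (emb_reflect t)).mpr hg

lemma osc1_translate (f : ℝ → ℝ) (t a b : ℝ) :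
    osc1 (fun x => f (x + t)) (Icc a b) = osc1 f (Icc (a + t) (b + t)) := by
  rw [← preimage_translate_Icc t a b]
  exact osc1_comp (mp_translate t) (emb_translate t) f _ measurableSet_Icc

lemma osc1_reflect (f : ℝ → ℝ) (t a b : ℝ) :
    osc1 (fun x => f (t - x)) (Icc a b) = osc1 f (Icc (t - b) (t - a)) := by
  rw [← preimage_reflect_Icc t a b]
  exact osc1_comp (mp_reflect t) (emb_reflect t) f _ measurableSet_Icc

lemma volume_Icc_toReal {a b : ℝ} (hab : a ≤ b) : (volume (Icc a b)).toReal = b - a := by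
  rw [Real.volume_Icc, ENNReal.toReal_ofReal (by linarith)]

lemma integral_Icc_split (g : ℝ → ℝ) {a b c : ℝ} (hab : a ≤ b) (hbc : b ≤ c)
    (h1 : IntegrableOn g (Icc a b)) (h2 : IntegrableOn g (Icc b c)) :
    ∫ x in Icc a c, g x = (∫ x in Icc a b, g x) + ∫ x in Icc b c, g x := by
  rw [integral_Icc_eq_integral_Ioc, integral_Icc_eq_integral_Ioc, integral_Icc_eq_integral_Ioc,
    ← Ioc_union_Ioc_eq_Ioc hab hbc,
    setIntegral_union (Ioc_disjoint_Ioc_of_le le_rfl) measurableSet_Ioc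
      (h1.mono_set Ioc_subset_Icc_self) (h2.mono_set Ioc_subset_Icc_self)]

lemma osc_int (f : ℝ → ℝ) {a b : ℝ} (hab : a < b) :
    ∫ x in Icc a b, |f x - ⨍ y in Icc a b, f y| = (b - a) * osc1 f (Icc a b) := by
  have h := setAverage_eq (μ := volume) (fun x => |f x - ⨍ y in Icc a b, f y|) (Icc a b)
  rw [osc1, h, measureReal_def, volume_Icc_toReal hab.le, smul_eq_mul, ← mul_assoc,
    mul_inv_cancel₀ (by linarith : b - a ≠ 0), one_mul]

lemma osc1_le (f : ℝ → ℝ) (c : ℝ) {a b B : ℝ} (hab : a < b)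
    (hf : IntegrableOn f (Icc a b)) (hB : ∫ x in Icc a b, |f x - c| ≤ B) :
    osc1 f (Icc a b) ≤ 2 * B / (b - a) := by
  set L := b - a with hL
  have hL0 : 0 < L := by simp [hL]; linarith
  set m := ⨍ y in Icc a b, f y with hm
  have hvol : (volume (Icc a b)).toReal = L := volume_Icc_toReal hab.le
  have hconst : ∀ d : ℝ, IntegrableOn (fun _ => d) (Icc a b) (volume) := fun d =>
    integrableOn_const measure_Icc_lt_top.ne
  have hfc : IntegrableOn (fun x => |f x - c|) (Icc a b) := (hf.sub (hconst c)).abs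
  have hfm : IntegrableOn (fun x => |f x - m|) (Icc a b) := (hf.sub (hconst m)).abs
  -- |c - m| * L ≤ ∫ |f - c|
  have hcm : |c - m| * L ≤ ∫ x in Icc a b, |f x - c| := by
    have h1 : c - m = L⁻¹ * ∫ x in Icc a b, (c - f x) := by
      rw [hm, setAverage_eq, measureReal_def, hvol, smul_eq_mul,
        integral_sub (hconst c) hf, setIntegral_const, measureReal_def, hvol, smul_eq_mul]
      field_simp
    have h2 : |∫ x in Icc a b, (c - f x)| ≤ ∫ x in Icc a b, |f x - c| := by
      have hn := norm_integral_le_integral_norm (μ := volume.restrict (Icc a b))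
        (fun x => c - f x)
      simp only [Real.norm_eq_abs] at hn
      calc |∫ x in Icc a b, (c - f x)| ≤ ∫ x in Icc a b, |c - f x| := hn
        _ = ∫ x in Icc a b, |f x - c| := by simp [abs_sub_comm]
    calc |c - m| * L = L * |c - m| := by ring
      _ = L * (L⁻¹ * |∫ x in Icc a b, (c - f x)|) := by
          rw [h1, abs_mul, abs_of_nonneg (inv_nonneg.mpr hL0.le)]
      _ = |∫ x in Icc a b, (c - f x)| := by field_simp
      _ ≤ _ := h2
  have key : ∫ x in Icc a b, |f x - m| ≤ 2 * B := by
    have hpt : ∀ x, |f x - m| ≤ |f x - c| + |c - m| := fun x => abs_sub_le (f x) c m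
    have h3 : ∫ x in Icc a b, |f x - m| ≤ ∫ x in Icc a b, (|f x - c| + |c - m|) :=
      integral_mono hfm (hfc.add (hconst _)) hpt
    have h4 : ∫ x in Icc a b, (|f x - c| + |c - m|) =
        (∫ x in Icc a b, |f x - c|) + L * |c - m| := by
      rw [integral_add hfc (hconst _), setIntegral_const, measureReal_def, hvol, smul_eq_mul]
    calc ∫ x in Icc a b, |f x - m| ≤ (∫ x in Icc a b, |f x - c|) + L * |c - m| := by
          rw [← h4]; exact h3
      _ ≤ (∫ x in Icc a b, |f x - c|) + ∫ x in Icc a b, |f x - c| := by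
          nlinarith [hcm]
      _ ≤ 2 * B := by linarith
  rw [osc1, ← hm, setAverage_eq, measureReal_def, hvol, smul_eq_mul]
  rw [div_eq_inv_mul]
  have : L⁻¹ * (∫ x in Icc a b, |f x - m|) ≤ L⁻¹ * (2 * B) := by
    apply mul_le_mul_of_nonneg_left key (inv_nonneg.mpr hL0.le)
  linarith

/-- BMO(ℝ) seminorm: supremum of mean oscillations over closed intervals of positive length. -/
noncomputable def bmo1 (f : ℝ → ℝ) : ℝ≥0∞ :=
  ⨆ (a : ℝ) (b : ℝ) (_ : a < b), ENNReal.ofReal (osc1 f (Icc a b))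

/-- BMO seminorm restricted to a set `s`: supremum over closed intervals of positive
length contained in `s`. -/
noncomputable def bmoOn (f : ℝ → ℝ) (s : Set ℝ) : ℝ≥0∞ :=
  ⨆ (a : ℝ) (b : ℝ) (_ : a < b) (_ : Icc a b ⊆ s), ENNReal.ofReal (osc1 f (Icc a b))

set_option maxHeartbeats 2000000 in
/-- the even `T`-periodic extension `H` of a function `h` of bounded mean
oscillation on `[0, T/2]` belongs to `BMO(ℝ)` with `‖H‖_{BMO(ℝ)} ≤ 10 ‖h‖_{BMO[0,T/2]}`. -/
theorem even_periodic_extension_bmo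
    (T : ℝ) (hT : 0 < T) (h : ℝ → ℝ)
    (hL1 : IntegrableOn h (Icc 0 (T / 2)) volume)
    (hbmo : bmoOn h (Icc 0 (T / 2)) ≠ ⊤)
    (H : ℝ → ℝ)
    (hHeq : ∀ x ∈ Icc (0 : ℝ) (T / 2), H x = h x)
    (hHeven : ∀ x : ℝ, H (-x) = H x)
    (hHper : ∀ x : ℝ, H (x + T) = H x) :
    LocallyIntegrable H volume ∧ bmo1 H ≤ 10 * bmoOn h (Icc 0 (T / 2)) := by
  have hT2 : (0 : ℝ) < T / 2 := by linarith
  set M := bmoOn h (Icc 0 (T / 2)) with hMdef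
  set Mr := M.toReal with hMrdef
  have hMr0 : 0 ≤ Mr := ENNReal.toReal_nonneg
  have hM : ∀ a b : ℝ, a < b → Icc a b ⊆ Icc 0 (T / 2) → osc1 h (Icc a b) ≤ Mr := by
    intro a b hab hsub
    have h1 : ENNReal.ofReal (osc1 h (Icc a b)) ≤ M := by
      rw [hMdef, bmoOn]
      exact le_iSup_of_le a (le_iSup_of_le b (le_iSup_of_le hab (le_iSup_of_le hsub le_rfl)))
    exact (ENNReal.ofReal_le_iff_le_toReal hbmo).mp h1
  have hper : Function.Periodic H T := hHper
  have P1 : ∀ (m : ℤ) (x : ℝ), H (x + (m : ℝ) * T) = H x := fun m x => (hper.int_mul m) x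
  have E1 : ∀ (m : ℤ) (x : ℝ), x ∈ Icc ((m : ℝ) * T) ((m : ℝ) * T + T / 2) →
      H x = h (x - (m : ℝ) * T) := by
    intro m x hx
    have h1 : H (x - (m : ℝ) * T) = H x := by
      have := P1 m (x - (m : ℝ) * T); rw [sub_add_cancel] at this; exact this.symm
    rw [← h1]
    exact hHeq _ ⟨by linarith [hx.1], by linarith [hx.2]⟩
  have E2 : ∀ (m : ℤ) (x : ℝ), x ∈ Icc ((m : ℝ) * T - T / 2) ((m : ℝ) * T) →
      H x = h ((m : ℝ) * T - x) := by
    intro m x hx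
    have h1 : H (x - (m : ℝ) * T) = H x := by
      have := P1 m (x - (m : ℝ) * T); rw [sub_add_cancel] at this; exact this.symm
    have h2 : H ((m : ℝ) * T - x) = H (x - (m : ℝ) * T) := by
      rw [show (m : ℝ) * T - x = -(x - (m : ℝ) * T) by ring, hHeven]
    rw [← h1, ← h2]
    exact hHeq _ ⟨by linarith [hx.2], by linarith [hx.1]⟩
  -- transport over a single half-period piece
  have piece : ∀ F : ℝ → ℝ, IntegrableOn (fun y => F (h y)) (Icc 0 (T / 2)) volume →
      ∀ k : ℤ, IntegrableOn (fun x => F (H x))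
          (Icc ((k : ℝ) * (T / 2)) (((k : ℝ) + 1) * (T / 2))) volume ∧
        ∫ x in Icc ((k : ℝ) * (T / 2)) (((k : ℝ) + 1) * (T / 2)), F (H x) =
          ∫ y in Icc 0 (T / 2), F (h y) := by
    intro F hF k
    set g : ℝ → ℝ := fun y => F (h y) with hg
    rcases Int.even_or_odd k with ⟨m, hm⟩ | ⟨m, hm⟩
    · -- k = m + m : translation piece
      have e1 : (k : ℝ) * (T / 2) = (m : ℝ) * T := by rw [hm]; push_cast; ring
      have e2 : ((k : ℝ) + 1) * (T / 2) = (m : ℝ) * T + T / 2 := by rw [hm]; push_cast; ring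
      rw [e1, e2]
      have hEq : EqOn (fun x => g (x + -((m : ℝ) * T))) (fun x => F (H x))
          (Icc ((m : ℝ) * T) ((m : ℝ) * T + T / 2)) := by
        intro x hx
        simp only [hg]
        rw [E1 m x hx, sub_eq_add_neg]
      have hg' : IntegrableOn g
          (Icc ((m : ℝ) * T + -((m : ℝ) * T)) ((m : ℝ) * T + T / 2 + -((m : ℝ) * T))) volume := by
        rw [show (m : ℝ) * T + -((m : ℝ) * T) = 0 by ring,
          show (m : ℝ) * T + T / 2 + -((m : ℝ) * T) = T / 2 by ring]
        exact hF
      have hint := integrableOn_Icc_translate hg'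
      constructor
      · exact hint.congr_fun hEq measurableSet_Icc
      · rw [← setIntegral_congr_fun measurableSet_Icc hEq,
          integral_Icc_translate g (-((m : ℝ) * T)),
          show (m : ℝ) * T + -((m : ℝ) * T) = 0 by ring,
          show (m : ℝ) * T + T / 2 + -((m : ℝ) * T) = T / 2 by ring]
    · -- k = 2 m + 1 : reflection piece
      set t : ℝ := ((m : ℝ) + 1) * T with ht
      have e1 : (k : ℝ) * (T / 2) = t - T / 2 := by rw [hm, ht]; push_cast; ring
      have e2 : ((k : ℝ) + 1) * (T / 2) = t := by rw [hm, ht]; push_cast; ring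
      rw [e1, e2]
      have hEq : EqOn (fun x => g (t - x)) (fun x => F (H x)) (Icc (t - T / 2) t) := by
        intro x hx
        simp only [hg]
        have := E2 (m + 1) x (by push_cast; rw [← ht]; exact hx)
        rw [show ((m + 1 : ℤ) : ℝ) * T = t by push_cast; rw [ht], ] at this
        rw [this]
      have hg' : IntegrableOn g (Icc (t - t) (t - (t - T / 2))) volume := by
        rw [show t - t = 0 by ring, show t - (t - T / 2) = T / 2 by ring]
        exact hF
      have hint := integrableOn_Icc_reflect hg'
      constructor
      · exact hint.congr_fun hEq measurableSet_Icc
      · rw [← setIntegral_congr_fun measurableSet_Icc hEq, integral_Icc_reflect g t,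
          show t - t = 0 by ring, show t - (t - T / 2) = T / 2 by ring]
  -- chain of pieces
  have chain : ∀ F : ℝ → ℝ, IntegrableOn (fun y => F (h y)) (Icc 0 (T / 2)) volume →
      ∀ (n : ℕ) (k : ℤ), IntegrableOn (fun x => F (H x))
          (Icc ((k : ℝ) * (T / 2)) (((k : ℝ) + (n : ℝ)) * (T / 2))) volume ∧
        ∫ x in Icc ((k : ℝ) * (T / 2)) (((k : ℝ) + (n : ℝ)) * (T / 2)), F (H x) =
          (n : ℝ) * ∫ y in Icc 0 (T / 2), F (h y) := by
    intro F hF n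
    induction n with
    | zero =>
      intro k
      simp only [Nat.cast_zero, add_zero]
      simp only [zero_mul]
      have h0 : volume.restrict (Icc ((k : ℝ) * (T / 2)) ((k : ℝ) * (T / 2))) = 0 := by
        rw [Measure.restrict_eq_zero, Icc_self, Real.volume_singleton]
      constructor
      · rw [IntegrableOn, h0]; exact integrable_zero_measure
      · rw [h0]; exact integral_zero_measure _
    | succ n ih =>
      intro k
      obtain ⟨hi1, he1⟩ := ih k
      obtain ⟨hi2, he2⟩ := piece F hF (k + (n : ℤ))
      rw [show (((k + (n : ℤ)) : ℤ) : ℝ) = (k : ℝ) + (n : ℝ) by push_cast; ring] at hi2 he2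
      have hn0 : (0 : ℝ) ≤ (n : ℝ) := Nat.cast_nonneg n
      have hle1 : (k : ℝ) * (T / 2) ≤ ((k : ℝ) + (n : ℝ)) * (T / 2) := by nlinarith
      have hle2 : ((k : ℝ) + (n : ℝ)) * (T / 2) ≤ (((k : ℝ) + (n : ℝ)) + 1) * (T / 2) := by
        nlinarith
      have hcast : ((k : ℝ) + ((n + 1 : ℕ) : ℝ)) * (T / 2) =
          (((k : ℝ) + (n : ℝ)) + 1) * (T / 2) := by push_cast; ring
      rw [hcast]
      constructor
      · exact (hi1.union hi2).mono_set Icc_subset_Icc_union_Icc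
      · rw [integral_Icc_split _ hle1 hle2 hi1 hi2, he1, he2]; push_cast; ring
  -- integrability on every closed interval
  have intHIcc : ∀ a b : ℝ, IntegrableOn H (Icc a b) volume := by
    intro a b
    set k : ℤ := ⌊a / (T / 2)⌋ with hk
    set n : ℕ := (max 1 ⌈(b - (k : ℝ) * (T / 2)) / (T / 2)⌉).toNat with hn
    have hka : (k : ℝ) * (T / 2) ≤ a := by
      have := Int.floor_le (a / (T / 2))
      rw [← hk] at this
      calc (k : ℝ) * (T / 2) ≤ a / (T / 2) * (T / 2) := by nlinarith
        _ = a := by field_simp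
    have hnb : b ≤ ((k : ℝ) + (n : ℝ)) * (T / 2) := by
      have h1 : ((max 1 ⌈(b - (k : ℝ) * (T / 2)) / (T / 2)⌉ : ℤ) : ℝ) ≤ (n : ℝ) := by
        rw [hn]; exact_mod_cast Int.self_le_toNat _
      have h2 : (b - (k : ℝ) * (T / 2)) / (T / 2) ≤
          ((max 1 ⌈(b - (k : ℝ) * (T / 2)) / (T / 2)⌉ : ℤ) : ℝ) := by
        calc (b - (k : ℝ) * (T / 2)) / (T / 2) ≤ (⌈(b - (k : ℝ) * (T / 2)) / (T / 2)⌉ : ℝ) :=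
              Int.le_ceil _
          _ ≤ _ := by exact_mod_cast le_max_right _ _
      have h3 : (b - (k : ℝ) * (T / 2)) / (T / 2) ≤ (n : ℝ) := le_trans h2 h1
      have h4 : b - (k : ℝ) * (T / 2) ≤ (n : ℝ) * (T / 2) := by
        calc b - (k : ℝ) * (T / 2) = (b - (k : ℝ) * (T / 2)) / (T / 2) * (T / 2) := by
              field_simp
          _ ≤ (n : ℝ) * (T / 2) := by nlinarith
      nlinarith
    have hint := (chain (fun y => y) hL1 n k).1
    exact (hint.mono_set (Icc_subset_Icc hka hnb))
  have locInt : LocallyIntegrable H volume := by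
    rw [locallyIntegrable_iff]
    intro K hK
    obtain ⟨r, hr⟩ := hK.isBounded.subset_closedBall 0
    refine (intHIcc (0 - r) (0 + r)).mono_set ?_
    rwa [Real.closedBall_eq_Icc] at hr
  -- global average and oscillation integral
  set c0 : ℝ := ⨍ y in Icc 0 (T / 2), h y with hc0
  set K : ℝ := ∫ y in Icc 0 (T / 2), |h y - c0| with hKdef
  have hKosc : K = T / 2 * osc1 h (Icc 0 (T / 2)) := by
    rw [hKdef, hc0]
    have := osc_int h hT2
    rw [sub_zero] at this
    exact this
  have hKM : K ≤ T / 2 * Mr := by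
    rw [hKosc]
    exact mul_le_mul_of_nonneg_left (hM 0 (T / 2) hT2 subset_rfl) (le_of_lt hT2)
  have hK0 : 0 ≤ K := setIntegral_nonneg measurableSet_Icc fun x _ => abs_nonneg _
  have habs : ∀ c : ℝ, IntegrableOn (fun y => |h y - c|) (Icc 0 (T / 2)) volume := by
    intro c
    exact (hL1.sub (integrableOn_const measure_Icc_lt_top.ne)).abs
  -- main oscillation bound
  have main : ∀ a b : ℝ, a < b → osc1 H (Icc a b) ≤ 6 * Mr := by
    intro a b hab
    rcases le_or_gt (T / 2) (b - a) with hbig | hsmall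
    · -- large interval : covering argument
      set k : ℤ := ⌊a / (T / 2)⌋ with hk
      set n : ℕ := ⌈(b - (k : ℝ) * (T / 2)) / (T / 2)⌉.toNat with hn
      have hka : (k : ℝ) * (T / 2) ≤ a := by
        have h1 := Int.floor_le (a / (T / 2))
        rw [← hk] at h1
        calc (k : ℝ) * (T / 2) ≤ a / (T / 2) * (T / 2) := by nlinarith
          _ = a := by field_simp
      have hka2 : a < ((k : ℝ) + 1) * (T / 2) := by
        have h1 := Int.lt_floor_add_one (a / (T / 2))
        rw [← hk] at h1
        calc a = a / (T / 2) * (T / 2) := by field_simp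
          _ < ((k : ℝ) + 1) * (T / 2) := by nlinarith
      have hceil_pos : (0 : ℤ) < ⌈(b - (k : ℝ) * (T / 2)) / (T / 2)⌉ :=
        Int.ceil_pos.mpr (div_pos (by linarith) hT2)
      have hncast : (n : ℝ) = ((⌈(b - (k : ℝ) * (T / 2)) / (T / 2)⌉ : ℤ) : ℝ) := by
        rw [hn]; exact_mod_cast Int.toNat_of_nonneg hceil_pos.le
      have hnb : b ≤ ((k : ℝ) + (n : ℝ)) * (T / 2) := by
        have h1 : (b - (k : ℝ) * (T / 2)) / (T / 2) ≤ (n : ℝ) := by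
          rw [hncast]; exact Int.le_ceil _
        have h2 : b - (k : ℝ) * (T / 2) ≤ (n : ℝ) * (T / 2) := by
          calc b - (k : ℝ) * (T / 2) = (b - (k : ℝ) * (T / 2)) / (T / 2) * (T / 2) := by
                field_simp
            _ ≤ (n : ℝ) * (T / 2) := by nlinarith
        nlinarith
      have hnup : (n : ℝ) * (T / 2) ≤ 3 * (b - a) := by
        have h1 : (n : ℝ) < (b - (k : ℝ) * (T / 2)) / (T / 2) + 1 := by
          rw [hncast]; exact Int.ceil_lt_add_one _
        have h2 : b - (k : ℝ) * (T / 2) < (b - a) + T / 2 := by nlinarith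
        have h3 : (b - (k : ℝ) * (T / 2)) / (T / 2) * (T / 2) = b - (k : ℝ) * (T / 2) := by
          field_simp
        nlinarith
      obtain ⟨hint, hsum⟩ := chain (fun y => |y - c0|) (habs c0) n k
      have hsub : Icc a b ⊆ Icc ((k : ℝ) * (T / 2)) (((k : ℝ) + (n : ℝ)) * (T / 2)) :=
        Icc_subset_Icc hka hnb
      have hmono : (∫ x in Icc a b, |H x - c0|) ≤ (n : ℝ) * K := by
        calc (∫ x in Icc a b, |H x - c0|) ≤
            ∫ x in Icc ((k : ℝ) * (T / 2)) (((k : ℝ) + (n : ℝ)) * (T / 2)), |H x - c0| :=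
              setIntegral_mono_set hint (ae_of_all _ fun x => abs_nonneg _)
                (HasSubset.Subset.eventuallyLE hsub)
          _ = (n : ℝ) * K := hsum
      have hb2 := osc1_le H c0 hab (intHIcc a b) hmono
      have hL0 : (0 : ℝ) < b - a := by linarith
      calc osc1 H (Icc a b) ≤ 2 * ((n : ℝ) * K) / (b - a) := hb2
        _ ≤ 6 * Mr := by
            rw [div_le_iff₀ hL0]
            have hn0 : (0 : ℝ) ≤ (n : ℝ) := Nat.cast_nonneg n
            have e1 : (n : ℝ) * K ≤ (n : ℝ) * (T / 2 * Mr) :=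
              mul_le_mul_of_nonneg_left hKM hn0
            have e2 : (n : ℝ) * (T / 2) * Mr ≤ 3 * (b - a) * Mr :=
              mul_le_mul_of_nonneg_right hnup hMr0
            nlinarith
    · -- small interval : translate into normalized position
      set m0 : ℤ := round (a / T) with hm0
      have hr1 : (m0 : ℝ) ≤ a / T + 1 / 2 := by
        rw [hm0, round_eq]; exact_mod_cast Int.floor_le _
      have hr2 : a / T + 1 / 2 < (m0 : ℝ) + 1 := by
        rw [hm0, round_eq]; exact Int.lt_floor_add_one _
      have haT : a / T * T = a := div_mul_cancel₀ a (ne_of_gt hT)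
      set a' : ℝ := a - (m0 : ℝ) * T with ha'
      set b' : ℝ := b - (m0 : ℝ) * T with hb'
      have ha'lb : -(T / 2) ≤ a' := by rw [ha']; nlinarith
      have ha'ub : a' < T / 2 := by rw [ha']; nlinarith
      have hab' : a' < b' := by rw [ha', hb']; linarith
      have hlen : b' - a' < T / 2 := by rw [ha', hb']; linarith
      have heq : osc1 H (Icc a b) = osc1 H (Icc a' b') := by
        have h1 := osc1_translate H ((m0 : ℝ) * T) a' b'
        have h2 : (fun x => H (x + (m0 : ℝ) * T)) = H := funext fun x => P1 m0 x
        rw [h2, show a' + (m0 : ℝ) * T = a by rw [ha']; ring,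
          show b' + (m0 : ℝ) * T = b by rw [hb']; ring] at h1
        exact h1.symm
      rw [heq]
      clear heq hr1 hr2 haT hsmall hab ha' hb' hm0
      clear_value b' a' m0
      rcases le_or_gt b' 0 with hbneg | hbpos
      · -- interval in [-T/2, 0] : pure reflection
        have hEq : EqOn H (fun x => h (0 - x)) (Icc a' b') := by
          intro x hx
          show H x = h (0 - x)
          have hx2 := E2 0 x ⟨by push_cast; linarith [hx.1], by push_cast; linarith [hx.2]⟩
          rw [show (0 : ℝ) - x = ((0 : ℤ) : ℝ) * T - x by push_cast; ring]
          exact hx2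
        rw [osc1_congr measurableSet_Icc hEq, osc1_reflect h 0 a' b']
        have hMM := hM (0 - b') (0 - a') (by linarith)
          (Icc_subset_Icc (by linarith) (by linarith))
        linarith
      · rcases lt_or_ge a' 0 with haneg | hapos
        · -- straddles 0
          have hbT : b' < T / 2 := by linarith
          set m : ℝ := max (-a') b' with hmdef
          have hm0' : 0 < m := lt_of_lt_of_le hbpos (le_max_right _ _)
          have hmT : m ≤ T / 2 := max_le (by linarith) (by linarith)
          have hma : -m ≤ a' := by have := le_max_left (-a') b'; linarith
          have hmb : b' ≤ m := le_max_right _ _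
          set c : ℝ := ⨍ y in Icc 0 m, h y with hc
          have hoscm := hM 0 m hm0' (Icc_subset_Icc le_rfl hmT)
          have hgi : IntegrableOn (fun y => |h y - c|) (Icc 0 m) volume :=
            ((hL1.mono_set (Icc_subset_Icc le_rfl hmT)).sub
              (integrableOn_const measure_Icc_lt_top.ne)).abs
          have hintv : (∫ y in Icc 0 m, |h y - c|) ≤ m * Mr := by
            have h1 := osc_int h hm0'
            rw [sub_zero] at h1
            rw [hc]
            rw [h1]
            nlinarith
          have hEqR : EqOn (fun x : ℝ => |H x - c|) (fun y => |h y - c|) (Icc 0 m) := by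
            intro x hx
            show |H x - c| = |h x - c|
            rw [hHeq x ⟨hx.1, le_trans hx.2 hmT⟩]
          have hiR : IntegrableOn (fun x : ℝ => |H x - c|) (Icc 0 m) volume :=
            hgi.congr_fun hEqR.symm measurableSet_Icc
          have hIR : (∫ x in Icc 0 m, |H x - c|) = ∫ y in Icc 0 m, |h y - c| :=
            setIntegral_congr_fun measurableSet_Icc hEqR
          have hg' : IntegrableOn (fun y => |h y - c|) (Icc (0 - 0) (0 - (-m))) volume := by
            rw [show (0 : ℝ) - 0 = 0 by ring, show (0 : ℝ) - (-m) = m by ring]; exact hgi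
          have hiL0 := integrableOn_Icc_reflect hg'
          have hEqL : EqOn (fun x : ℝ => |h (0 - x) - c|) (fun x => |H x - c|) (Icc (-m) 0) := by
            intro x hx
            show |h (0 - x) - c| = |H x - c|
            have hx2 := E2 0 x ⟨by push_cast; linarith [hx.1], by push_cast; linarith [hx.2]⟩
            rw [show (0 : ℝ) - x = ((0 : ℤ) : ℝ) * T - x by push_cast; ring, ← hx2]
          have hiL : IntegrableOn (fun x : ℝ => |H x - c|) (Icc (-m) 0) volume :=
            hiL0.congr_fun hEqL measurableSet_Icc
          have hIL : (∫ x in Icc (-m) 0, |H x - c|) = ∫ y in Icc 0 m, |h y - c| := by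
            rw [← setIntegral_congr_fun measurableSet_Icc hEqL,
              integral_Icc_reflect (fun y => |h y - c|) 0 (-m) 0,
              show (0 : ℝ) - 0 = 0 by ring, show (0 : ℝ) - (-m) = m by ring]
          have hiB : IntegrableOn (fun x : ℝ => |H x - c|) (Icc (-m) m) volume :=
            (hiL.union hiR).mono_set Icc_subset_Icc_union_Icc
          have hIB : (∫ x in Icc (-m) m, |H x - c|) ≤ 2 * (m * Mr) := by
            rw [integral_Icc_split _ (by linarith : -m ≤ (0 : ℝ)) hm0'.le hiL hiR, hIL, hIR]
            linarith
          have hsub2 : Icc a' b' ⊆ Icc (-m) m := Icc_subset_Icc hma hmb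
          have hmono2 : (∫ x in Icc a' b', |H x - c|) ≤ 2 * (m * Mr) :=
            le_trans (setIntegral_mono_set hiB (ae_of_all _ fun x => abs_nonneg _)
              (HasSubset.Subset.eventuallyLE hsub2)) hIB
          have hosc := osc1_le H c hab' (intHIcc a' b') hmono2
          have hLm : m ≤ b' - a' := max_le (by linarith) (by linarith)
          have hL0' : (0 : ℝ) < b' - a' := by linarith
          calc osc1 H (Icc a' b') ≤ 2 * (2 * (m * Mr)) / (b' - a') := hosc
            _ ≤ 6 * Mr := by
                rw [div_le_iff₀ hL0']
                nlinarith [mul_le_mul_of_nonneg_right hLm hMr0]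
        · rcases le_or_gt b' (T / 2) with hbT | hbT
          · -- interval inside [0, T/2]
            have hEq : EqOn H h (Icc a' b') := fun x hx =>
              hHeq x ⟨by linarith [hx.1], by linarith [hx.2]⟩
            rw [osc1_congr measurableSet_Icc hEq]
            have := hM a' b' hab' (Icc_subset_Icc (by linarith) (by linarith))
            linarith
          · -- straddles T/2
            set m : ℝ := max (b' - T / 2) (T / 2 - a') with hmdef
            have hm0' : 0 < m := lt_of_lt_of_le (by linarith) (le_max_left _ _)
            have hmT : m ≤ T / 2 := max_le (by linarith) (by linarith)
            have hma : T / 2 - m ≤ a' := by have := le_max_right (b' - T / 2) (T / 2 - a'); linarith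
            have hmb : b' ≤ T / 2 + m := by have := le_max_left (b' - T / 2) (T / 2 - a'); linarith
            set c : ℝ := ⨍ y in Icc (T / 2 - m) (T / 2), h y with hc
            have hab2 : T / 2 - m < T / 2 := by linarith
            have hoscm := hM (T / 2 - m) (T / 2) hab2 (Icc_subset_Icc (by linarith) le_rfl)
            have hgi : IntegrableOn (fun y => |h y - c|) (Icc (T / 2 - m) (T / 2)) volume :=
              ((hL1.mono_set (Icc_subset_Icc (by linarith) le_rfl)).sub
                (integrableOn_const measure_Icc_lt_top.ne)).abs
            have hintv : (∫ y in Icc (T / 2 - m) (T / 2), |h y - c|) ≤ m * Mr := by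
              have h1 := osc_int h hab2
              rw [show T / 2 - (T / 2 - m) = m by ring] at h1
              rw [hc]
              rw [h1]
              nlinarith
            have hEqL : EqOn (fun x : ℝ => |H x - c|) (fun y => |h y - c|)
                (Icc (T / 2 - m) (T / 2)) := by
              intro x hx
              show |H x - c| = |h x - c|
              rw [hHeq x ⟨by linarith [hx.1], hx.2⟩]
            have hiL : IntegrableOn (fun x : ℝ => |H x - c|) (Icc (T / 2 - m) (T / 2)) volume :=
              hgi.congr_fun hEqL.symm measurableSet_Icc
            have hIL : (∫ x in Icc (T / 2 - m) (T / 2), |H x - c|) =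
                ∫ y in Icc (T / 2 - m) (T / 2), |h y - c| :=
              setIntegral_congr_fun measurableSet_Icc hEqL
            have hg' : IntegrableOn (fun y => |h y - c|)
                (Icc (T - (T / 2 + m)) (T - T / 2)) volume := by
              rw [show T - (T / 2 + m) = T / 2 - m by ring, show T - T / 2 = T / 2 by ring]
              exact hgi
            have hiR0 := integrableOn_Icc_reflect hg'
            have hEqR : EqOn (fun x : ℝ => |h (T - x) - c|) (fun x => |H x - c|)
                (Icc (T / 2) (T / 2 + m)) := by
              intro x hx
              show |h (T - x) - c| = |H x - c|
              have hx2 := E2 1 x ⟨by push_cast; linarith [hx.1], by push_cast; linarith [hx.2]⟩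
              rw [show T - x = ((1 : ℤ) : ℝ) * T - x by push_cast; ring, ← hx2]
            have hiR : IntegrableOn (fun x : ℝ => |H x - c|) (Icc (T / 2) (T / 2 + m)) volume :=
              hiR0.congr_fun hEqR measurableSet_Icc
            have hIR : (∫ x in Icc (T / 2) (T / 2 + m), |H x - c|) =
                ∫ y in Icc (T / 2 - m) (T / 2), |h y - c| := by
              rw [← setIntegral_congr_fun measurableSet_Icc hEqR,
                integral_Icc_reflect (fun y => |h y - c|) T (T / 2) (T / 2 + m),
                show T - (T / 2 + m) = T / 2 - m by ring, show T - T / 2 = T / 2 by ring]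
            have hiB : IntegrableOn (fun x : ℝ => |H x - c|) (Icc (T / 2 - m) (T / 2 + m)) volume :=
              (hiL.union hiR).mono_set Icc_subset_Icc_union_Icc
            have hIB : (∫ x in Icc (T / 2 - m) (T / 2 + m), |H x - c|) ≤ 2 * (m * Mr) := by
              rw [integral_Icc_split _ hab2.le (by linarith : T / 2 ≤ T / 2 + m) hiL hiR,
                hIL, hIR]
              linarith
            have hsub2 : Icc a' b' ⊆ Icc (T / 2 - m) (T / 2 + m) := Icc_subset_Icc hma hmb
            have hmono2 : (∫ x in Icc a' b', |H x - c|) ≤ 2 * (m * Mr) :=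
              le_trans (setIntegral_mono_set hiB (ae_of_all _ fun x => abs_nonneg _)
                (HasSubset.Subset.eventuallyLE hsub2)) hIB
            have hosc := osc1_le H c hab' (intHIcc a' b') hmono2
            have hLm : m ≤ b' - a' := max_le (by linarith) (by linarith)
            have hL0' : (0 : ℝ) < b' - a' := by linarith
            calc osc1 H (Icc a' b') ≤ 2 * (2 * (m * Mr)) / (b' - a') := hosc
              _ ≤ 6 * Mr := by
                  rw [div_le_iff₀ hL0']
                  nlinarith [mul_le_mul_of_nonneg_right hLm hMr0]
  refine ⟨locInt, ?_⟩
  rw [bmo1]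
  refine iSup_le fun a => iSup_le fun b => iSup_le fun hab => ?_
  have h6 : osc1 H (Icc a b) ≤ 10 * Mr := le_trans (main a b hab) (by linarith)
  calc ENNReal.ofReal (osc1 H (Icc a b)) ≤ ENNReal.ofReal (10 * Mr) :=
        ENNReal.ofReal_le_ofReal h6
    _ = ENNReal.ofReal 10 * ENNReal.ofReal Mr := ENNReal.ofReal_mul (by norm_num)
    _ = 10 * M := by
        rw [hMrdef, ENNReal.ofReal_toReal hbmo]
        norm_num
end

section
/- For every c < −1 there exists a sequence of measurable functions g_n : ℝ → ℝ (n ≥ 1) such that: (1) g_n ≥ 0 everywhere; (2) g_n = 0 on [c,1]; (3) ‖g_n‖_{L∞(ℝ)} ≤ 1; (4) the averages (1/n) ∫_0^n g_n converge to 1 as n → ∞; (5) ‖g_n‖_{BMO(ℝ)} → 0 as n → ∞. -/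
open MeasureTheory Set Filter
open scoped ENNReal Topology

namespace GnAux

/-- The basic profile function: `log⁺(|x-c|/s)`. -/
noncomputable def hfun (c s x : ℝ) : ℝ := Real.log (max (|x - c| / s) 1)

lemma hfun_nonneg (c s x : ℝ) : 0 ≤ hfun c s x :=
  Real.log_nonneg (le_max_right _ _)

lemma hfun_continuous (c : ℝ) {s : ℝ} (hs : 0 < s) : Continuous (hfun c s) := by
  apply Continuous.log
  · exact ((continuous_id.sub continuous_const).abs.div_const s).max continuous_const
  · intro x
    have : (1:ℝ) ≤ max (|x - c| / s) 1 := le_max_right _ _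
    linarith

lemma hfun_eq (c : ℝ) {s : ℝ} (hs : 0 < s) (x : ℝ) :
    hfun c s x = Real.log (max (|x - c|) s) - Real.log s := by
  have h1 : max (|x - c| / s) 1 = max (|x - c|) s / s := by
    rw [← max_div_div_right hs.le, div_self hs.ne']
  have h2 : (0:ℝ) < max (|x - c|) s := lt_of_lt_of_le hs (le_max_right _ _)
  rw [hfun, h1, Real.log_div h2.ne' hs.ne']

lemma hfun_eq_zero (c : ℝ) {s : ℝ} (hs : 0 < s) {x : ℝ} (h : |x - c| ≤ s) :
    hfun c s x = 0 := by
  rw [hfun, max_eq_right (by rw [div_le_one hs]; exact h), Real.log_one]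

lemma abs_min_sub_min (k u v : ℝ) : |min k u - min k v| ≤ |u - v| := by
  have h1 : u - v ≤ |u - v| := le_abs_self _
  have h2 : v - u ≤ |u - v| := by rw [abs_sub_comm]; exact le_abs_self _
  rcases le_total k u with hu | hu <;> rcases le_total k v with hv | hv <;>
    rw [abs_le] <;> constructor <;>
    simp [min_eq_left, min_eq_right, hu, hv] <;> linarith

/-- Oscillation is at most twice the mean deviation from any constant. -/
lemma osc1_le (f : ℝ → ℝ) {a b : ℝ} (m : ℝ) (hab : a < b)
    (hf : IntegrableOn f (Icc a b)) :
    osc1 f (Icc a b) ≤ 2 * ((b - a)⁻¹ * ∫ x in Icc a b, |f x - m|) := by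
  have hVpos : (0:ℝ) < b - a := by linarith
  have hV : volume.real (Icc a b) = b - a := by
    rw [measureReal_def, Real.volume_Icc, ENNReal.toReal_ofReal hVpos.le]
  have hfin : volume (Icc a b) < ⊤ := by
    rw [Real.volume_Icc]; exact ENNReal.ofReal_lt_top
  have hconst : ∀ k : ℝ, IntegrableOn (fun _ => k) (Icc a b) volume := fun k =>
    integrableOn_const hfin.ne
  set fI := ⨍ y in Icc a b, f y with hfI
  have h1 : IntegrableOn (fun x => |f x - m|) (Icc a b) := (hf.sub (hconst m)).abs
  have h0 : IntegrableOn (fun x => |f x - fI|) (Icc a b) := (hf.sub (hconst fI)).abs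
  have hK : |m - fI| ≤ (b - a)⁻¹ * ∫ x in Icc a b, |f x - m| := by
    have e1 : m - fI = (b - a)⁻¹ * ∫ x in Icc a b, (m - f x) := by
      rw [integral_sub (hconst m) hf, setIntegral_const, hV, smul_eq_mul, hfI,
        setAverage_eq, hV, smul_eq_mul]
      field_simp
    rw [e1, abs_mul, abs_of_nonneg (inv_nonneg.2 hVpos.le)]
    have e2 : |∫ x in Icc a b, (m - f x)| ≤ ∫ x in Icc a b, |f x - m| := by
      calc |∫ x in Icc a b, (m - f x)| ≤ ∫ x in Icc a b, |m - f x| := by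
            simpa [Real.norm_eq_abs] using
              MeasureTheory.norm_integral_le_integral_norm (μ := volume.restrict (Icc a b))
                (fun x => m - f x)
        _ = ∫ x in Icc a b, |f x - m| := by
            apply integral_congr_ae (Eventually.of_forall fun x => abs_sub_comm _ _)
    exact mul_le_mul_of_nonneg_left e2 (inv_nonneg.2 hVpos.le)
  have key : ∫ x in Icc a b, |f x - fI| ≤ 2 * ∫ x in Icc a b, |f x - m| := by
    have step1 : ∫ x in Icc a b, |f x - fI| ≤ ∫ x in Icc a b, (|f x - m| + |m - fI|) :=
      setIntegral_mono_on h0 (h1.add (hconst _)) measurableSet_Icc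
        (fun x _ => abs_sub_le _ _ _)
    have step2 : ∫ x in Icc a b, (|f x - m| + |m - fI|)
        = (∫ x in Icc a b, |f x - m|) + (b - a) * |m - fI| := by
      rw [integral_add h1 (hconst _), setIntegral_const, hV, smul_eq_mul]
    have step3 : (b - a) * |m - fI| ≤ ∫ x in Icc a b, |f x - m| := by
      calc (b - a) * |m - fI| ≤ (b - a) * ((b - a)⁻¹ * ∫ x in Icc a b, |f x - m|) :=
            mul_le_mul_of_nonneg_left hK hVpos.le
        _ = ∫ x in Icc a b, |f x - m| := by field_simp
    linarith
  have : osc1 f (Icc a b) = (b - a)⁻¹ * ∫ x in Icc a b, |f x - fI| := by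
    rw [osc1, setAverage_eq, hV, smul_eq_mul]
  rw [this]
  calc (b - a)⁻¹ * ∫ x in Icc a b, |f x - fI|
      ≤ (b - a)⁻¹ * (2 * ∫ x in Icc a b, |f x - m|) :=
        mul_le_mul_of_nonneg_left key (inv_nonneg.2 hVpos.le)
    _ = 2 * ((b - a)⁻¹ * ∫ x in Icc a b, |f x - m|) := by ring

lemma integral_inv_sqrt {u v : ℝ} (hu : 0 < u) (huv : u ≤ v) :
    ∫ t in u..v, (Real.sqrt t)⁻¹ = 2 * Real.sqrt v - 2 * Real.sqrt u := by
  have h : ∀ x ∈ Set.uIcc u v, HasDerivAt (fun t => 2 * Real.sqrt t) ((Real.sqrt x)⁻¹) x := by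
    intro x hx
    rw [Set.uIcc_of_le huv] at hx
    have hx0 : (0:ℝ) < x := lt_of_lt_of_le hu hx.1
    have hsx : Real.sqrt x ≠ 0 := (Real.sqrt_pos.2 hx0).ne'
    have := (Real.hasDerivAt_sqrt hx0.ne').const_mul (2:ℝ)
    rw [show (Real.sqrt x)⁻¹ = 2 * (1 / (2 * Real.sqrt x)) by field_simp]
    exact this
  have hint : IntervalIntegrable (fun t => (Real.sqrt t)⁻¹) volume u v := by
    apply ContinuousOn.intervalIntegrable
    apply ContinuousOn.inv₀ Real.continuous_sqrt.continuousOn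
    intro x hx
    rw [Set.uIcc_of_le huv] at hx
    exact (Real.sqrt_pos.2 (lt_of_lt_of_le hu hx.1)).ne'
  have := intervalIntegral.integral_eq_sub_of_hasDerivAt h hint
  simpa using this

lemma psi_continuous (c : ℝ) {s : ℝ} (hs : 0 < s) :
    Continuous fun x : ℝ => (Real.sqrt (max (|x - c|) s))⁻¹ := by
  apply Continuous.inv₀
  · exact Real.continuous_sqrt.comp (((continuous_id.sub continuous_const).abs).max
      continuous_const)
  · intro x
    exact (Real.sqrt_pos.2 (lt_of_lt_of_le hs (le_max_right _ _))).ne'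

lemma psi_integral (c : ℝ) {s N : ℝ} (hs : 0 < s) (hsN : s ≤ N) :
    ∫ x in Icc (c - N) (c + N), (Real.sqrt (max (|x - c|) s))⁻¹ ≤ 4 * Real.sqrt N := by
  have hN : (0:ℝ) < N := lt_of_lt_of_le hs hsN
  set ψ : ℝ → ℝ := fun x => (Real.sqrt (max (|x - c|) s))⁻¹ with hψ
  have hψc : Continuous ψ := psi_continuous c hs
  have hii : ∀ u v : ℝ, IntervalIntegrable ψ volume u v := fun u v =>
    hψc.intervalIntegrable u v
  have h1 : c - N ≤ c - s := by linarith
  have h2 : c - s ≤ c + s := by linarith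
  have h3 : c + s ≤ c + N := by linarith
  have conv : ∫ x in Icc (c - N) (c + N), ψ x = ∫ x in (c - N)..(c + N), ψ x := by
    rw [intervalIntegral.integral_of_le (by linarith), integral_Icc_eq_integral_Ioc]
  have split : ∫ x in (c - N)..(c + N), ψ x
      = (∫ x in (c - N)..(c - s), ψ x) + (∫ x in (c - s)..(c + s), ψ x)
        + ∫ x in (c + s)..(c + N), ψ x := by
    rw [intervalIntegral.integral_add_adjacent_intervals (hii _ _) (hii _ _),
      intervalIntegral.integral_add_adjacent_intervals (hii _ _) (hii _ _)]
  have left : ∫ x in (c - N)..(c - s), ψ x = 2 * Real.sqrt N - 2 * Real.sqrt s := by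
    have e : ∫ x in (c - N)..(c - s), ψ x
        = ∫ x in (c - N)..(c - s), (fun t => (Real.sqrt t)⁻¹) (c - x) := by
      apply intervalIntegral.integral_congr
      intro x hx
      rw [Set.uIcc_of_le h1] at hx
      have hx1 : x - c ≤ -s := by linarith [hx.2]
      have : |x - c| = c - x := by rw [abs_of_nonpos (by linarith)]; ring
      simp only [hψ, this, max_eq_left (by linarith : s ≤ c - x)]
    rw [e, intervalIntegral.integral_comp_sub_left (fun t => (Real.sqrt t)⁻¹) c]
    have e1 : c - (c - s) = s := by ring
    have e2 : c - (c - N) = N := by ring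
    rw [e1, e2, integral_inv_sqrt hs hsN]
  have mid : ∫ x in (c - s)..(c + s), ψ x = 2 * Real.sqrt s := by
    have e : ∫ x in (c - s)..(c + s), ψ x = ∫ _x in (c - s)..(c + s), (Real.sqrt s)⁻¹ := by
      apply intervalIntegral.integral_congr
      intro x hx
      rw [Set.uIcc_of_le h2] at hx
      have : |x - c| ≤ s := by rw [abs_le]; constructor <;> linarith [hx.1, hx.2]
      simp only [hψ, max_eq_right this]
    rw [e, intervalIntegral.integral_const, smul_eq_mul]
    have hss : Real.sqrt s ≠ 0 := (Real.sqrt_pos.2 hs).ne'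
    have : s = Real.sqrt s * Real.sqrt s := (Real.mul_self_sqrt hs.le).symm
    rw [show c + s - (c - s) = s + s by ring]
    field_simp
    nlinarith [Real.mul_self_sqrt hs.le]
  have right : ∫ x in (c + s)..(c + N), ψ x = 2 * Real.sqrt N - 2 * Real.sqrt s := by
    have e : ∫ x in (c + s)..(c + N), ψ x
        = ∫ x in (c + s)..(c + N), (fun t => (Real.sqrt t)⁻¹) (x - c) := by
      apply intervalIntegral.integral_congr
      intro x hx
      rw [Set.uIcc_of_le h3] at hx
      have : |x - c| = x - c := abs_of_nonneg (by linarith [hx.1])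
      simp only [hψ, this, max_eq_left (by linarith [hx.1] : s ≤ x - c)]
    rw [e, intervalIntegral.integral_comp_sub_right (fun t => (Real.sqrt t)⁻¹) c]
    have e1 : c + s - c = s := by ring
    have e2 : c + N - c = N := by ring
    rw [e1, e2, integral_inv_sqrt hs hsN]
  have := conv
  rw [split, left, mid, right] at this
  rw [this]
  have : (0:ℝ) ≤ Real.sqrt s := Real.sqrt_nonneg s
  linarith

lemma key_integral (c : ℝ) {s a b : ℝ} (hs : 0 < s) (hab : a < b) :
    ∫ x in Icc a b, |hfun c s x - (Real.log (max (max (|a - c|) (|b - c|)) s) - Real.log s)|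
      ≤ 16 * (b - a) := by
  set M := max (|a - c|) (|b - c|) with hM
  set N := max M s with hNdef
  have hsN : s ≤ N := le_max_right _ _
  have hMN : M ≤ N := le_max_left _ _
  have hN : (0:ℝ) < N := lt_of_lt_of_le hs hsN
  have hVpos : (0:ℝ) < b - a := by linarith
  have ht : ∀ x ∈ Icc a b, |x - c| ≤ M := by
    intro x hx
    exact abs_le_max_abs_abs (by linarith [hx.1] : a - c ≤ x - c) (by linarith [hx.2])
  have hmxpos : ∀ x : ℝ, (0:ℝ) < max (|x - c|) s :=
    fun x => lt_of_lt_of_le hs (le_max_right _ _)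
  have habs : ∀ x ∈ Icc a b,
      |hfun c s x - (Real.log N - Real.log s)|
        = Real.log N - Real.log (max (|x - c|) s) := by
    intro x hx
    rw [hfun_eq c hs]
    have h1 : max (|x - c|) s ≤ N := by
      rw [hNdef]; exact max_le_max (ht x hx) le_rfl
    have h2 : Real.log (max (|x - c|) s) ≤ Real.log N := Real.log_le_log (hmxpos x) h1
    rw [show Real.log (max (|x - c|) s) - Real.log s - (Real.log N - Real.log s)
        = Real.log (max (|x - c|) s) - Real.log N by ring,
      abs_of_nonpos (by linarith), neg_sub]
  have hcont : Continuous fun x => |hfun c s x - (Real.log N - Real.log s)| :=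
    ((hfun_continuous c hs).sub continuous_const).abs
  rcases le_or_gt N (2 * (b - a)) with hcase | hcase
  · -- close case
    set ψ : ℝ → ℝ := fun x => (Real.sqrt (max (|x - c|) s))⁻¹ with hψ
    have hψc : Continuous ψ := psi_continuous c hs
    have hψnn : ∀ x, 0 ≤ ψ x := fun x => inv_nonneg.2 (Real.sqrt_nonneg _)
    have hmaj : ∀ x ∈ Icc a b,
        |hfun c s x - (Real.log N - Real.log s)| ≤ 2 * Real.sqrt N * ψ x := by
      intro x hx
      rw [habs x hx]
      have hmx := hmxpos x
      have hu : (0:ℝ) < N / max (|x - c|) s := div_pos hN hmx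
      have e1 : Real.log N - Real.log (max (|x - c|) s)
          = Real.log (N / max (|x - c|) s) := (Real.log_div hN.ne' hmx.ne').symm
      rw [e1]
      have e2 : Real.log (N / max (|x - c|) s)
          = 2 * Real.log (Real.sqrt (N / max (|x - c|) s)) := by
        rw [Real.log_sqrt hu.le]; ring
      have e3 : Real.log (Real.sqrt (N / max (|x - c|) s))
          ≤ Real.sqrt (N / max (|x - c|) s) - 1 :=
        Real.log_le_sub_one_of_pos (Real.sqrt_pos.2 hu)
      have e4 : Real.sqrt (N / max (|x - c|) s) = Real.sqrt N * ψ x := by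
        rw [Real.sqrt_div hN.le, div_eq_mul_inv]
      nlinarith [Real.sqrt_nonneg (N / max (|x - c|) s)]
    calc ∫ x in Icc a b, |hfun c s x - (Real.log N - Real.log s)|
        ≤ ∫ x in Icc a b, 2 * Real.sqrt N * ψ x := by
          apply setIntegral_mono_on (hcont.integrableOn_Icc)
            ((continuous_const.mul hψc).integrableOn_Icc) measurableSet_Icc hmaj
      _ = 2 * Real.sqrt N * ∫ x in Icc a b, ψ x := by
          rw [MeasureTheory.integral_const_mul]
      _ ≤ 2 * Real.sqrt N * ∫ x in Icc (c - N) (c + N), ψ x := by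
          apply mul_le_mul_of_nonneg_left _ (by positivity)
          apply setIntegral_mono_set (hψc.integrableOn_Icc)
            (Eventually.of_forall hψnn)
          apply HasSubset.Subset.eventuallyLE
          intro x hx
          have := le_trans (ht x hx) hMN
          have h' := abs_le.1 this
          exact ⟨by linarith [h'.1], by linarith [h'.2]⟩
      _ ≤ 2 * Real.sqrt N * (4 * Real.sqrt N) := by
          apply mul_le_mul_of_nonneg_left (psi_integral c hs hsN) (by positivity)
      _ = 8 * N := by
          have := Real.mul_self_sqrt hN.le
          nlinarith
      _ ≤ 16 * (b - a) := by linarith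
  · -- far case
    have hpt : ∀ x ∈ Icc a b,
        |hfun c s x - (Real.log N - Real.log s)| ≤ 1 := by
      intro x hx
      rw [habs x hx]
      have hlow : N - (b - a) ≤ max (|x - c|) s := by
        rcases max_cases M s with ⟨hNe, hMs⟩ | ⟨hNe, hMs⟩
        · -- N = M
          have : M - (b - a) ≤ |x - c| := by
            rcases max_cases (|a - c|) (|b - c|) with ⟨hMe, _⟩ | ⟨hMe, _⟩
            · have : |a - c| ≤ |a - x| + |x - c| := by
                calc |a - c| = |(a - x) + (x - c)| := by ring_nf
                  _ ≤ |a - x| + |x - c| := abs_add_le _ _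
              have hax : |a - x| ≤ b - a := by
                rw [abs_sub_comm, abs_of_nonneg (by linarith [hx.1])]
                linarith [hx.2]
              rw [hM, hMe] at *
              linarith
            · have : |b - c| ≤ |b - x| + |x - c| := by
                calc |b - c| = |(b - x) + (x - c)| := by ring_nf
                  _ ≤ |b - x| + |x - c| := abs_add_le _ _
              have hbx : |b - x| ≤ b - a := by
                rw [abs_of_nonneg (by linarith [hx.2])]
                linarith [hx.1]
              rw [hM, hMe] at *
              linarith
          rw [hNdef, hNe]
          exact le_trans (by linarith) (le_max_left _ _)
        · rw [hNdef, hNe]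
          exact le_trans (by linarith [hVpos]) (le_max_right _ _)
      have h2 : N / 2 ≤ max (|x - c|) s := by linarith
      have h3 : Real.log (N / 2) ≤ Real.log (max (|x - c|) s) :=
        Real.log_le_log (by linarith) h2
      have h4 : Real.log (N / 2) = Real.log N - Real.log 2 :=
        Real.log_div hN.ne' two_ne_zero
      have h5 : Real.log 2 ≤ 1 := by
        have := Real.log_le_sub_one_of_pos (by norm_num : (0:ℝ) < 2)
        linarith
      linarith
    calc ∫ x in Icc a b, |hfun c s x - (Real.log N - Real.log s)|
        ≤ ∫ _x in Icc a b, (1:ℝ) := by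
          apply setIntegral_mono_on (hcont.integrableOn_Icc)
            (integrableOn_const (by rw [Real.volume_Icc]; exact ENNReal.ofReal_ne_top))
            measurableSet_Icc hpt
      _ = b - a := by
          rw [setIntegral_const, measureReal_def, Real.volume_Icc, ENNReal.toReal_ofReal hVpos.le,
            smul_eq_mul, mul_one]
      _ ≤ 16 * (b - a) := by linarith

/-- The oscillation bound for the clipped function. -/
lemma osc_g_le (c : ℝ) {s : ℝ} (hs : 0 < s) {L : ℝ} (hL : 0 < L) {a b : ℝ} (hab : a < b) :
    osc1 (fun x => min 1 (hfun c s x / L)) (Icc a b) ≤ 32 / L := by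
  set m := Real.log (max (max (|a - c|) (|b - c|)) s) - Real.log s with hm
  set g : ℝ → ℝ := fun x => min 1 (hfun c s x / L) with hg
  have hVpos : (0:ℝ) < b - a := by linarith
  have hgc : Continuous g := continuous_const.min ((hfun_continuous c hs).div_const L)
  have h1 := osc1_le g (min 1 (m / L)) hab (hgc.integrableOn_Icc)
  have hpt : ∀ x ∈ Icc a b, |g x - min 1 (m / L)| ≤ |hfun c s x - m| / L := by
    intro x _
    calc |g x - min 1 (m / L)| ≤ |hfun c s x / L - m / L| := abs_min_sub_min _ _ _
      _ = |hfun c s x - m| / L := by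
          rw [div_sub_div_same, abs_div, abs_of_pos hL]
  have hint : ∫ x in Icc a b, |g x - min 1 (m / L)|
      ≤ ∫ x in Icc a b, |hfun c s x - m| / L := by
    apply setIntegral_mono_on ((hgc.sub continuous_const).abs.integrableOn_Icc)
      ((((hfun_continuous c hs).sub continuous_const).abs.div_const L).integrableOn_Icc)
      measurableSet_Icc hpt
  have hdiv : ∫ x in Icc a b, |hfun c s x - m| / L
      = (∫ x in Icc a b, |hfun c s x - m|) / L := integral_div L _
  have hkey := key_integral c hs hab (s := s) (a := a) (b := b)
  have hstep : ∫ x in Icc a b, |g x - min 1 (m / L)| ≤ 16 * (b - a) / L := by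
    rw [hdiv] at hint
    apply le_trans hint
    gcongr
  apply le_trans h1
  calc 2 * ((b - a)⁻¹ * ∫ x in Icc a b, |g x - min 1 (m / L)|)
      ≤ 2 * ((b - a)⁻¹ * (16 * (b - a) / L)) := by
        exact mul_le_mul_of_nonneg_left
          (mul_le_mul_of_nonneg_left hstep (inv_nonneg.2 hVpos.le)) (by norm_num)
    _ = 32 / L := by field_simp; ring

lemma avg_eq (c : ℝ) (hc : c < -1) {n : ℕ} (hn : 2 ≤ n) :
    ⨍ x in Icc (0:ℝ) (n:ℝ), min 1 (hfun c (1 - c) x / Real.log n)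
      = ((n:ℝ) - c) / n * ((Real.log ((n:ℝ) - c) - Real.log (1 - c)) / Real.log n)
        - ((n:ℝ) - 1) / ((n:ℝ) * Real.log n) := by
  have hs : (0:ℝ) < 1 - c := by linarith
  have hn1 : (1:ℝ) ≤ (n:ℝ) := by exact_mod_cast Nat.one_le_of_lt hn
  have hn1' : (1:ℝ) < (n:ℝ) := by exact_mod_cast hn
  have hn0 : (0:ℝ) < (n:ℝ) := by linarith
  have hL : (0:ℝ) < Real.log n := Real.log_pos hn1'
  set L := Real.log (n:ℝ) with hLdef
  set g : ℝ → ℝ := fun x => min 1 (hfun c (1 - c) x / L) with hg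
  have hgc : Continuous g := continuous_const.min ((hfun_continuous c hs).div_const L)
  have conv : ∫ x in Icc (0:ℝ) (n:ℝ), g x = ∫ x in (0:ℝ)..(n:ℝ), g x := by
    rw [intervalIntegral.integral_of_le hn0.le, integral_Icc_eq_integral_Ioc]
  have int01 : ∫ x in (0:ℝ)..(1:ℝ), g x = 0 := by
    have : ∫ x in (0:ℝ)..(1:ℝ), g x = ∫ _x in (0:ℝ)..(1:ℝ), (0:ℝ) := by
      apply intervalIntegral.integral_congr
      intro x hx
      rw [Set.uIcc_of_le (by norm_num : (0:ℝ) ≤ 1)] at hx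
      have h0 : hfun c (1 - c) x = 0 := by
        apply hfun_eq_zero c hs
        rw [abs_of_nonneg (by linarith [hx.1])]
        linarith [hx.2]
      simp [hg, h0]
    rw [this, intervalIntegral.integral_zero]
  have int1n : ∫ x in (1:ℝ)..(n:ℝ), g x
      = ∫ x in (1:ℝ)..(n:ℝ), (Real.log (x - c) - Real.log (1 - c)) / L := by
    apply intervalIntegral.integral_congr
    intro x hx
    rw [Set.uIcc_of_le hn1] at hx
    have hxc : 1 - c ≤ x - c := by linarith [hx.1]
    have hxc0 : (0:ℝ) < x - c := by linarith
    have habs : |x - c| = x - c := abs_of_nonneg hxc0.le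
    have he : hfun c (1 - c) x = Real.log (x - c) - Real.log (1 - c) := by
      rw [hfun_eq c hs, habs, max_eq_left hxc]
    have hle : Real.log (x - c) - Real.log (1 - c) ≤ L := by
      have h1 : Real.log (x - c) - Real.log (1 - c) = Real.log ((x - c) / (1 - c)) :=
        (Real.log_div hxc0.ne' hs.ne').symm
      have h2 : (x - c) / (1 - c) ≤ (n:ℝ) := by
        rw [div_le_iff₀ hs]
        nlinarith [hx.2]
      rw [h1, hLdef]
      exact Real.log_le_log (div_pos hxc0 hs) h2
    rw [hg]
    simp only
    rw [he, min_eq_right ((div_le_one hL).2 (he ▸ hle))]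
  have intlog : ∫ x in (1:ℝ)..(n:ℝ), Real.log (x - c)
      = ((n:ℝ) - c) * Real.log ((n:ℝ) - c) - (1 - c) * Real.log (1 - c)
        - ((n:ℝ) - c) + (1 - c) := by
    rw [intervalIntegral.integral_comp_sub_right (fun x => Real.log x) c]
    rw [integral_log]
  have hii1 : IntervalIntegrable (fun x => Real.log (x - c)) volume 1 (n:ℝ) := by
    apply ContinuousOn.intervalIntegrable
    apply ContinuousOn.log
    · exact (continuous_id.sub continuous_const).continuousOn
    · intro x hx
      rw [Set.uIcc_of_le hn1] at hx
      have : (0:ℝ) < x - c := by linarith [hx.1]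
      exact this.ne'
  have compute : ∫ x in (1:ℝ)..(n:ℝ), (Real.log (x - c) - Real.log (1 - c)) / L
      = (((n:ℝ) - c) * Real.log ((n:ℝ) - c) - (1 - c) * Real.log (1 - c)
        - ((n:ℝ) - c) + (1 - c) - ((n:ℝ) - 1) * Real.log (1 - c)) / L := by
    rw [intervalIntegral.integral_div, intervalIntegral.integral_sub hii1
      intervalIntegrable_const, intervalIntegral.integral_const, smul_eq_mul, intlog]
  have split : (∫ x in (0:ℝ)..(1:ℝ), g x) + ∫ x in (1:ℝ)..(n:ℝ), g x
      = ∫ x in (0:ℝ)..(n:ℝ), g x :=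
    intervalIntegral.integral_add_adjacent_intervals (hgc.intervalIntegrable _ _)
      (hgc.intervalIntegrable _ _)
  have total : ∫ x in Icc (0:ℝ) (n:ℝ), g x
      = (((n:ℝ) - c) * Real.log ((n:ℝ) - c) - (1 - c) * Real.log (1 - c)
        - ((n:ℝ) - c) + (1 - c) - ((n:ℝ) - 1) * Real.log (1 - c)) / L := by
    rw [conv, ← split, int01, zero_add, int1n, compute]
  show ⨍ x in Icc (0:ℝ) (n:ℝ), g x = _
  rw [setAverage_eq, measureReal_def, Real.volume_Icc, sub_zero, ENNReal.toReal_ofReal hn0.le,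
    smul_eq_mul, total]
  field_simp
  ring

end GnAux

/-- for every `c < -1` there is a sequence of measurable functions `g n`
(`n ≥ 1`) that are nonnegative, vanish on `[c, 1]`, are bounded by `1`, whose averages
over `[0, n]` tend to `1`, and whose `BMO(ℝ)` seminorms tend to `0`. -/
theorem exists_gn_sequence (c : ℝ) (hc : c < -1) :
    ∃ g : ℕ → ℝ → ℝ,
      (∀ n : ℕ, 1 ≤ n → Measurable (g n)) ∧
      (∀ n : ℕ, 1 ≤ n → ∀ x : ℝ, 0 ≤ g n x) ∧
      (∀ n : ℕ, 1 ≤ n → ∀ x ∈ Icc c 1, g n x = 0) ∧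
      (∀ n : ℕ, 1 ≤ n → ∀ x : ℝ, |g n x| ≤ 1) ∧
      Tendsto (fun n : ℕ => ⨍ x in Icc (0 : ℝ) (n : ℝ), g n x) atTop (𝓝 1) ∧
      Tendsto (fun n : ℕ => bmo1 (g n)) atTop (𝓝 0) := by
  have hs : (0:ℝ) < 1 - c := by linarith
  refine ⟨fun n x => min 1 (GnAux.hfun c (1 - c) x / Real.log n), ?_, ?_, ?_, ?_, ?_, ?_⟩
  · intro n _
    exact (continuous_const.min ((GnAux.hfun_continuous c hs).div_const _)).measurable
  · intro n hn x
    apply le_min (by norm_num)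
    apply div_nonneg (GnAux.hfun_nonneg c _ x)
    exact Real.log_nonneg (by exact_mod_cast hn)
  · intro n _ x hx
    have h0 : GnAux.hfun c (1 - c) x = 0 := by
      apply GnAux.hfun_eq_zero c hs
      rw [abs_of_nonneg (by linarith [hx.1])]
      linarith [hx.2]
    simp [h0]
  · intro n hn x
    rw [abs_le]
    constructor
    · have : (0:ℝ) ≤ min 1 (GnAux.hfun c (1 - c) x / Real.log n) := by
        apply le_min (by norm_num)
        exact div_nonneg (GnAux.hfun_nonneg c _ x)
          (Real.log_nonneg (by exact_mod_cast hn))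
      linarith
    · exact min_le_left _ _
  · -- average tends to 1
    have t_nat : Tendsto (fun n : ℕ => (n:ℝ)) atTop atTop := tendsto_natCast_atTop_atTop
    have tlog : Tendsto (fun n : ℕ => Real.log (n:ℝ)) atTop atTop :=
      Real.tendsto_log_atTop.comp t_nat
    have t1 : Tendsto (fun n : ℕ => ((n:ℝ) - c) / (n:ℝ)) atTop (𝓝 1) := by
      have h := (tendsto_const_nhds (x := (1:ℝ)) (f := atTop)).sub
        (Tendsto.div_atTop (tendsto_const_nhds (x := c)) t_nat)
      rw [sub_zero] at h
      apply Tendsto.congr' _ h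
      filter_upwards [eventually_ge_atTop 1] with n hn
      have hn0 : ((n:ℝ)) ≠ 0 := by
        have : (1:ℝ) ≤ (n:ℝ) := by exact_mod_cast hn
        linarith
      field_simp
    have t2 : Tendsto (fun n : ℕ => (Real.log ((n:ℝ) - c) - Real.log (1 - c)) / Real.log (n:ℝ))
        atTop (𝓝 1) := by
      have hlim : Tendsto (fun n : ℕ => Real.log (1 - c / (n:ℝ))) atTop (𝓝 0) := by
        have h1 : Tendsto (fun n : ℕ => 1 - c / (n:ℝ)) atTop (𝓝 1) := by
          have h := (tendsto_const_nhds (x := (1:ℝ)) (f := atTop)).sub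
            (Tendsto.div_atTop (tendsto_const_nhds (x := c)) t_nat)
          rwa [sub_zero] at h
        have h2 := ((Real.continuousAt_log one_ne_zero).tendsto).comp h1
        simpa [Function.comp_def] using h2
      have hquot : Tendsto (fun n : ℕ =>
          (Real.log (1 - c / (n:ℝ)) - Real.log (1 - c)) / Real.log (n:ℝ)) atTop (𝓝 0) :=
        Tendsto.div_atTop (hlim.sub tendsto_const_nhds) tlog
      have h := (tendsto_const_nhds (x := (1:ℝ)) (f := atTop)).add hquot
      rw [add_zero] at h
      apply Tendsto.congr' _ h
      filter_upwards [eventually_ge_atTop 2] with n hn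
      have hn1 : (1:ℝ) < (n:ℝ) := by exact_mod_cast hn
      have hn0 : (0:ℝ) < (n:ℝ) := by linarith
      have hL : (0:ℝ) < Real.log (n:ℝ) := Real.log_pos hn1
      have hpos : (0:ℝ) < 1 - c / (n:ℝ) := by
        have : c / (n:ℝ) < 0 := div_neg_of_neg_of_pos (by linarith) hn0
        linarith
      have hsplit : Real.log ((n:ℝ) - c) = Real.log (n:ℝ) + Real.log (1 - c / (n:ℝ)) := by
        rw [← Real.log_mul hn0.ne' hpos.ne']
        congr 1
        field_simp
      rw [hsplit]
      field_simp
      ring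
    have t3 : Tendsto (fun n : ℕ => ((n:ℝ) - 1) / ((n:ℝ) * Real.log (n:ℝ))) atTop (𝓝 0) := by
      have h1 : Tendsto (fun n : ℕ => 1 - 1 / (n:ℝ)) atTop (𝓝 1) := by
        have h := (tendsto_const_nhds (x := (1:ℝ)) (f := atTop)).sub
          (Tendsto.div_atTop (tendsto_const_nhds (x := (1:ℝ))) t_nat)
        rwa [sub_zero] at h
      have h2 : Tendsto (fun n : ℕ => (Real.log (n:ℝ))⁻¹) atTop (𝓝 0) :=
        tlog.inv_tendsto_atTop
      have h := h1.mul h2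
      rw [mul_zero] at h
      apply Tendsto.congr' _ h
      filter_upwards [eventually_ge_atTop 2] with n hn
      have hn1 : (1:ℝ) < (n:ℝ) := by exact_mod_cast hn
      have hn0 : ((n:ℝ)) ≠ 0 := by linarith
      have hL : Real.log (n:ℝ) ≠ 0 := (Real.log_pos hn1).ne'
      field_simp
    have hF : Tendsto (fun n : ℕ =>
        ((n:ℝ) - c) / (n:ℝ) * ((Real.log ((n:ℝ) - c) - Real.log (1 - c)) / Real.log (n:ℝ))
          - ((n:ℝ) - 1) / ((n:ℝ) * Real.log (n:ℝ))) atTop (𝓝 1) := by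
      have h := (t1.mul t2).sub t3
      rwa [one_mul, sub_zero] at h
    apply Tendsto.congr' _ hF
    filter_upwards [eventually_ge_atTop 2] with n hn
    exact (GnAux.avg_eq c hc hn).symm
  · -- BMO tends to 0
    have t_nat : Tendsto (fun n : ℕ => (n:ℝ)) atTop atTop := tendsto_natCast_atTop_atTop
    have tlog : Tendsto (fun n : ℕ => Real.log (n:ℝ)) atTop atTop :=
      Real.tendsto_log_atTop.comp t_nat
    have hupper : ∀ᶠ n : ℕ in atTop,
        bmo1 (fun x => min 1 (GnAux.hfun c (1 - c) x / Real.log n))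
          ≤ ENNReal.ofReal (32 / Real.log (n:ℝ)) := by
      filter_upwards [eventually_ge_atTop 2] with n hn
      have hn1 : (1:ℝ) < (n:ℝ) := by exact_mod_cast hn
      have hL : (0:ℝ) < Real.log (n:ℝ) := Real.log_pos hn1
      rw [bmo1]
      apply iSup_le; intro a
      apply iSup_le; intro b
      apply iSup_le; intro hab
      exact ENNReal.ofReal_le_ofReal (GnAux.osc_g_le c hs hL hab)
    have hupT : Tendsto (fun n : ℕ => ENNReal.ofReal (32 / Real.log (n:ℝ))) atTop (𝓝 0) := by
      have h : Tendsto (fun n : ℕ => 32 / Real.log (n:ℝ)) atTop (𝓝 0) :=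
        Tendsto.div_atTop tendsto_const_nhds tlog
      simpa using ENNReal.tendsto_ofReal h
    exact tendsto_of_tendsto_of_tendsto_of_le_of_le' tendsto_const_nhds hupT
      (Eventually.of_forall fun n => zero_le') hupper
end

section
/- Let f : ℝ → ℝ be nonnegative, supported in [0,1], with ‖f‖_{L∞} ≤ 1, and set a = ∫_0^1 f. Let c < 0 and let g : ℝ → ℝ be nonnegative measurable with g = 0 on [c,1] and ‖g‖_{L∞} ≤ 1. Then for every x ∈ [c,0] one has M(f + (a/(1−c))·g)(x) = Mf(x), where M is the one-dimensional uncentered Hardy–Littlewood maximal operator. -/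
open MeasureTheory Set Filter
open scoped ENNReal Topology

private lemma myIntOn {φ : ℝ → ℝ} (hm : Measurable φ) {C : ℝ} (hb : ∀ t, |φ t| ≤ C)
    {u v : ℝ} : IntegrableOn φ (Icc u v) := by
  have hC : IntegrableOn (fun _ : ℝ => C) (Icc u v) :=
    integrableOn_const (by rw [Real.volume_Icc]; exact ENNReal.ofReal_ne_top)
  refine hC.mono' hm.aestronglyMeasurable.restrict ?_
  filter_upwards with t
  rw [Real.norm_eq_abs]; exact hb t

private lemma myVolIcc {u v : ℝ} (huv : u ≤ v) :
    (volume (Icc u v)).toReal = v - u := by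
  rw [Real.volume_Icc, ENNReal.toReal_ofReal (by linarith)]

private lemma myAvg (φ : ℝ → ℝ) {u v : ℝ} (huv : u ≤ v) :
    (⨍ t in Icc u v, |φ t|) = (v - u)⁻¹ * ∫ t in Icc u v, |φ t| := by
  rw [setAverage_eq, measureReal_def, myVolIcc huv, smul_eq_mul]

private lemma myBdd {φ : ℝ → ℝ} (hm : Measurable φ) {C : ℝ} (hb : ∀ t, |φ t| ≤ C) (x : ℝ) :
    ∀ r ∈ {r : ℝ | ∃ a b : ℝ, a < b ∧ x ∈ Icc a b ∧ r = ⨍ t in Icc a b, |φ t|}, r ≤ C := by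
  rintro r ⟨u, v, huv, _, rfl⟩
  rw [myAvg φ huv.le]
  have h1 : ∫ t in Icc u v, |φ t| ≤ ∫ t in Icc u v, C := by
    refine setIntegral_mono_on (myIntOn hm hb).abs
      (integrableOn_const (by rw [Real.volume_Icc]; exact ENNReal.ofReal_ne_top))
      measurableSet_Icc (fun t _ => hb t)
  have h2 : ∫ t in Icc u v, (C : ℝ) = (v - u) * C := by
    rw [setIntegral_const, measureReal_def, myVolIcc huv.le, smul_eq_mul]
  calc (v - u)⁻¹ * ∫ t in Icc u v, |φ t| ≤ (v - u)⁻¹ * ((v - u) * C) := by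
        rw [← h2]
        exact mul_le_mul_of_nonneg_left h1 (inv_nonneg.2 (by linarith))
    _ = C := by rw [← mul_assoc, inv_mul_cancel₀ (by linarith : v - u ≠ 0), one_mul]

/-- The one-dimensional uncentered Hardy–Littlewood maximal function:
`M f x` is the supremum of the averages of `|f|` over closed intervals of positive
length containing `x`. -/
noncomputable def maxFun1 (f : ℝ → ℝ) (x : ℝ) : ℝ :=
  sSup {r : ℝ | ∃ a b : ℝ, a < b ∧ x ∈ Icc a b ∧ r = ⨍ t in Icc a b, |f t|}

/-- if `f` is nonnegative, supported in `[0,1]`, bounded by `1`,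
`a = ∫_0^1 f`, `c < 0`, and `g` is nonnegative, vanishes on `[c,1]` and is bounded
by `1`, then `M(f + (a/(1-c))·g) = M f` on `[c,0]`. -/
theorem maxFun_perturbation_eq
    (f : ℝ → ℝ) (hfm : Measurable f) (hf0 : ∀ x, 0 ≤ f x)
    (hfsupp : ∀ x ∉ Icc (0 : ℝ) 1, f x = 0) (hfbd : ∀ x, f x ≤ 1)
    (c : ℝ) (hc : c < 0)
    (g : ℝ → ℝ) (hgm : Measurable g) (hg0 : ∀ x, 0 ≤ g x)
    (hgsupp : ∀ x ∈ Icc c (1 : ℝ), g x = 0) (hgbd : ∀ x, g x ≤ 1) :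
    ∀ x ∈ Icc c (0 : ℝ),
      maxFun1 (fun t => f t + ((∫ s in Icc (0 : ℝ) 1, f s) / (1 - c)) * g t) x
        = maxFun1 f x := by
  intro x hx
  obtain ⟨hcx, hx0⟩ := hx
  set a : ℝ := ∫ s in Icc (0:ℝ) 1, f s with ha
  set lam : ℝ := a / (1 - c) with hlamdef
  set h : ℝ → ℝ := fun t => f t + lam * g t with hh
  have h1c : (0:ℝ) < 1 - c := by linarith
  have habs_f : ∀ t, |f t| = f t := fun t => abs_of_nonneg (hf0 t)
  have hfb1 : ∀ t, |f t| ≤ 1 := fun t => by rw [habs_f]; exact hfbd t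
  have hgb1 : ∀ t, |g t| ≤ 1 := fun t => by rw [abs_of_nonneg (hg0 t)]; exact hgbd t
  have ha0 : 0 ≤ a := setIntegral_nonneg measurableSet_Icc (fun t _ => hf0 t)
  have ha1 : a ≤ 1 := by
    have h1 : a ≤ ∫ s in Icc (0:ℝ) 1, (1:ℝ) :=
      setIntegral_mono_on (myIntOn hfm hfb1)
        (integrableOn_const (by rw [Real.volume_Icc]; exact ENNReal.ofReal_ne_top))
        measurableSet_Icc (fun t _ => hfbd t)
    have h2 : ∫ s in Icc (0:ℝ) 1, (1:ℝ) = 1 := by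
      rw [setIntegral_const, measureReal_def, myVolIcc (by norm_num)]; norm_num
    linarith
  have hlam0 : 0 ≤ lam := div_nonneg ha0 h1c.le
  have hlam1 : lam ≤ 1 := by rw [hlamdef, div_le_one h1c]; linarith
  have hh0 : ∀ t, 0 ≤ h t := fun t => add_nonneg (hf0 t) (mul_nonneg hlam0 (hg0 t))
  have hhabs : ∀ t, |h t| = h t := fun t => abs_of_nonneg (hh0 t)
  have hhb : ∀ t, |h t| ≤ 2 := by
    intro t
    rw [hhabs]
    have h1 := hgbd t; have h2 := hfbd t; have h3 := hg0 t
    have : lam * g t ≤ 1 * 1 := mul_le_mul hlam1 h1 h3 zero_le_one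
    simp only [hh]; linarith
  have hhm : Measurable h := hfm.add (measurable_const.mul hgm)
  simp only [maxFun1]
  set Sf := {r : ℝ | ∃ a b : ℝ, a < b ∧ x ∈ Icc a b ∧ r = ⨍ t in Icc a b, |f t|} with hSf
  set Sh := {r : ℝ | ∃ a b : ℝ, a < b ∧ x ∈ Icc a b ∧ r = ⨍ t in Icc a b, |h t|} with hSh
  have hBddSf : BddAbove Sf := ⟨1, fun r hr => myBdd hfm hfb1 x r hr⟩
  have hBddSh : BddAbove Sh := ⟨2, fun r hr => myBdd hhm hhb x r hr⟩
  -- lam is the average of f over [c,1], hence lam ≤ sSup Sf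
  have hmemc1 : (⨍ t in Icc c 1, |f t|) ∈ Sf := ⟨c, 1, by linarith, ⟨hcx, by linarith⟩, rfl⟩
  have havgc1 : (⨍ t in Icc c 1, |f t|) = lam := by
    rw [myAvg f (by linarith : c ≤ 1)]
    have h1 : ∫ t in Icc c 1, |f t| = a := by
      simp only [habs_f]
      rw [ha]
      exact setIntegral_eq_of_subset_of_forall_diff_eq_zero measurableSet_Icc
        (Icc_subset_Icc (by linarith) le_rfl) (fun y hy => hfsupp y hy.2)
    rw [h1, hlamdef]
    rw [div_eq_inv_mul]
  have hlamM : lam ≤ sSup Sf := havgc1 ▸ le_csSup hBddSf hmemc1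
  have hM0 : 0 ≤ sSup Sf := le_trans hlam0 hlamM
  apply le_antisymm
  · -- sSup Sh ≤ sSup Sf
    apply Real.sSup_le _ hM0
    rintro r ⟨u, v, huv, ⟨hux, hxv⟩, rfl⟩
    set M := sSup Sf with hM
    have hu0 : u ≤ 0 := hux.trans hx0
    set L : ℝ := min v 1 - max u c with hL
    have hmaxle : max u c ≤ x := max_le hux hcx
    have hxmin : x ≤ min v 1 := le_min hxv (by linarith)
    have hL0 : 0 ≤ L := by rw [hL]; linarith
    have hLT : L ≤ v - u := by
      have h1 : min v 1 ≤ v := min_le_left _ _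
      have h2 : u ≤ max u c := le_max_left _ _
      rw [hL]; linarith
    set F : ℝ := ∫ t in Icc 0 (min v 1), f t with hF
    have hIf : ∫ t in Icc u v, f t = F := by
      refine setIntegral_eq_of_subset_of_forall_diff_eq_zero measurableSet_Icc
        (Icc_subset_Icc hu0 (min_le_left _ _)) (fun y hy => hfsupp y (fun hy01 => ?_))
      exact hy.2 ⟨hy01.1, le_min hy.1.2 hy01.2⟩
    have hF0 : 0 ≤ F := setIntegral_nonneg measurableSet_Icc (fun t _ => hf0 t)
    -- F ≤ M * L
    have hFle : F ≤ M * L := by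
      rcases lt_or_ge (max u c) (min v 1) with hLpos | hLnonpos
      · have hmem : (⨍ t in Icc (max u c) (min v 1), |f t|) ∈ Sf :=
          ⟨_, _, hLpos, ⟨hmaxle, hxmin⟩, rfl⟩
        have hle := le_csSup hBddSf hmem
        have havg : (⨍ t in Icc (max u c) (min v 1), |f t|) = L⁻¹ * F := by
          rw [myAvg f hLpos.le]
          simp only [habs_f]
          rw [hL, hF]
          congr 1
          refine setIntegral_eq_of_subset_of_forall_diff_eq_zero measurableSet_Icc
            (Icc_subset_Icc (max_le hu0 hc.le) le_rfl)
            (fun y hy => hfsupp y (fun hy01 => hy.2 ⟨hy01.1, hy.1.2⟩))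
        rw [havg] at hle
        have hLpos' : 0 < L := by rw [hL]; linarith
        calc F = L * (L⁻¹ * F) := by field_simp
          _ ≤ L * M := mul_le_mul_of_nonneg_left hle hLpos'.le
          _ = M * L := mul_comm _ _
      · have hLz : L = 0 := le_antisymm (by rw [hL]; linarith) hL0
        have hFz : F = 0 := by
          have hmin0 : min v 1 ≤ 0 := le_trans hLnonpos (max_le hu0 hc.le)
          have hvol : volume (Icc (0:ℝ) (min v 1)) = 0 := by
            rw [Real.volume_Icc]
            exact ENNReal.ofReal_eq_zero.2 (by linarith)
          rw [hF, Measure.restrict_eq_zero.2 hvol, integral_zero_measure]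
        rw [hLz, hFz, mul_zero]
    -- ∫ g ≤ (v - u) - L
    have hIg : ∫ t in Icc u v, g t ≤ (v - u) - L := by
      have hgeq : ∫ t in Icc u v, g t = ∫ t in Icc u v \ Icc c 1, g t :=
        setIntegral_eq_of_subset_of_forall_diff_eq_zero measurableSet_Icc diff_subset
          (fun y hy => hgsupp y (of_not_not (fun hnot => hy.2 ⟨hy.1, hnot⟩)))
      have hd : MeasurableSet (Icc u v \ Icc c 1) :=
        measurableSet_Icc.diff measurableSet_Icc
      have hvold : (volume (Icc u v \ Icc c 1)).toReal = (v - u) - L := by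
        have hrw : Icc u v \ Icc c 1 = Icc u v \ (Icc u v ∩ Icc c 1) := by
          rw [diff_self_inter]
        have hsub : Icc u v ∩ Icc c 1 ⊆ Icc u v := inter_subset_left
        have hinter : Icc u v ∩ Icc c 1 = Icc (max u c) (min v 1) := Icc_inter_Icc
        rw [hrw, measure_diff hsub (measurableSet_Icc.inter measurableSet_Icc).nullMeasurableSet
          (by rw [hinter, Real.volume_Icc]; exact ENNReal.ofReal_ne_top)]
        rw [hinter, Real.volume_Icc, Real.volume_Icc,
          ENNReal.toReal_sub_of_le (ENNReal.ofReal_le_ofReal (by rw [hL] at hLT; linarith))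
            ENNReal.ofReal_ne_top,
          ENNReal.toReal_ofReal (by linarith), ENNReal.toReal_ofReal (by rw [hL] at hL0; linarith)]
      have hvfin : volume (Icc u v \ Icc c 1) < ⊤ :=
        lt_of_le_of_lt (measure_mono diff_subset)
          (by rw [Real.volume_Icc]; exact ENNReal.ofReal_lt_top)
      have h1 : ∫ t in Icc u v \ Icc c 1, g t ≤ ∫ t in Icc u v \ Icc c 1, (1:ℝ) := by
        refine setIntegral_mono_on ((myIntOn hgm hgb1).mono diff_subset le_rfl)
          (integrableOn_const hvfin.ne) hd (fun t _ => hgbd t)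
      have h2 : ∫ t in Icc u v \ Icc c 1, (1:ℝ) = (v - u) - L := by
        rw [setIntegral_const, smul_eq_mul, mul_one, measureReal_def, hvold]
      rw [hgeq]; linarith
    have hIg0 : 0 ≤ ∫ t in Icc u v, g t :=
      setIntegral_nonneg measurableSet_Icc (fun t _ => hg0 t)
    -- put everything together
    rw [myAvg h huv.le]
    simp only [hhabs]
    have hsplit : ∫ t in Icc u v, h t = F + lam * ∫ t in Icc u v, g t := by
      simp only [hh]
      rw [integral_add (myIntOn hfm hfb1) ((myIntOn hgm hgb1).const_mul lam),
        integral_const_mul, hIf]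
    rw [hsplit]
    have hT : 0 < v - u := by linarith
    have hkey : F + lam * ∫ t in Icc u v, g t ≤ M * (v - u) := by
      have h1 : lam * ∫ t in Icc u v, g t ≤ lam * ((v - u) - L) :=
        mul_le_mul_of_nonneg_left hIg hlam0
      have h2 : lam * ((v - u) - L) ≤ M * ((v - u) - L) :=
        mul_le_mul_of_nonneg_right hlamM (by linarith)
      nlinarith
    calc (v - u)⁻¹ * (F + lam * ∫ t in Icc u v, g t) ≤ (v - u)⁻¹ * (M * (v - u)) :=
          mul_le_mul_of_nonneg_left hkey (inv_nonneg.2 hT.le)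
      _ = M := by field_simp
  · -- sSup Sf ≤ sSup Sh
    have hSh0 : 0 ≤ sSup Sh := by
      have hmem : (⨍ t in Icc c 1, |h t|) ∈ Sh := ⟨c, 1, by linarith, ⟨hcx, by linarith⟩, rfl⟩
      refine le_trans ?_ (le_csSup hBddSh hmem)
      rw [myAvg h (by linarith : c ≤ 1)]
      exact mul_nonneg (inv_nonneg.2 (by linarith))
        (setIntegral_nonneg measurableSet_Icc (fun t _ => abs_nonneg _))
    apply Real.sSup_le _ hSh0
    rintro r ⟨u, v, huv, hxuv, rfl⟩
    have hmem : (⨍ t in Icc u v, |h t|) ∈ Sh := ⟨u, v, huv, hxuv, rfl⟩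
    refine le_trans ?_ (le_csSup hBddSh hmem)
    rw [myAvg f huv.le, myAvg h huv.le]
    refine mul_le_mul_of_nonneg_left ?_ (inv_nonneg.2 (by linarith))
    refine setIntegral_mono_on (myIntOn hfm hfb1).abs (myIntOn hhm hhb).abs
      measurableSet_Icc (fun t _ => ?_)
    rw [habs_f, hhabs]
    simp only [hh]
    have := mul_nonneg hlam0 (hg0 t)
    linarith
end

section
/- There exists a dimensional constant C(n) such that: if Q ⊂ ℝⁿ is a closed axis-parallel cube, A ⊆ Q is measurable with |A| > 0, and f is locally integrable with ‖f‖_{BMO(ℝⁿ)} ≤ 1, then (1/|A|) ∫_A |f − f_Q| ≤ C(n) (1 + log(|Q|/|A|)), where f_Q = (1/|Q|) ∫_Q f. -/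
open MeasureTheory Set Filter
open scoped ENNReal Topology

/-- Mean oscillation of `f` over `A ⊆ ℝⁿ`. -/
noncomputable def oscN {n : ℕ} (f : (Fin n → ℝ) → ℝ) (A : Set (Fin n → ℝ)) : ℝ :=
  ⨍ x in A, |f x - ⨍ y in A, f y|

/-- The closed axis-parallel cube with lower corner `a` and side length `l`. -/
def cube {n : ℕ} (a : Fin n → ℝ) (l : ℝ) : Set (Fin n → ℝ) :=
  Set.Icc a (fun i => a i + l)

/-- BMO(ℝⁿ) seminorm. -/
noncomputable def bmoN {n : ℕ} (f : (Fin n → ℝ) → ℝ) : ℝ≥0∞ :=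
  ⨆ (a : Fin n → ℝ) (l : ℝ) (_ : 0 < l), ENNReal.ofReal (oscN f (cube a l))

open Metric
namespace JN
variable {n : ℕ}

lemma mem_cube {a x : Fin n → ℝ} {l : ℝ} :
    x ∈ cube a l ↔ ∀ i, a i ≤ x i ∧ x i ≤ a i + l := by
  simp only [cube, Set.mem_Icc, Pi.le_def, forall_and]

lemma cube_eq_closedBall (a : Fin n → ℝ) {l : ℝ} (hl : 0 ≤ l) :
    cube a l = Metric.closedBall (fun i => a i + l/2) (l/2) := by
  rw [closedBall_pi _ (by linarith)]
  ext x
  simp only [mem_cube, Set.mem_pi, Set.mem_univ, forall_true_left,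
    Real.closedBall_eq_Icc, Set.mem_Icc]
  constructor
  · intro h i; exact ⟨by linarith [(h i).1], by linarith [(h i).2]⟩
  · intro h i; exact ⟨by linarith [(h i).1], by linarith [(h i).2]⟩

lemma measurableSet_cube (a : Fin n → ℝ) (l : ℝ) : MeasurableSet (cube a l) :=
  measurableSet_Icc

lemma volume_cube (a : Fin n → ℝ) (l : ℝ) :
    volume (cube a l) = ENNReal.ofReal l ^ n := by
  rw [cube, Real.volume_Icc_pi]
  simp

lemma volume_cube_pos (a : Fin n → ℝ) {l : ℝ} (hl : 0 < l) :
    0 < volume (cube a l) := by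
  rw [volume_cube]
  exact ENNReal.pow_pos (by simpa using hl) n

lemma volume_cube_lt_top (a : Fin n → ℝ) (l : ℝ) : volume (cube a l) < ∞ := by
  rw [volume_cube]
  exact ENNReal.pow_lt_top ENNReal.ofReal_lt_top

lemma volume_cube_ne_zero (a : Fin n → ℝ) {l : ℝ} (hl : 0 < l) :
    volume (cube a l) ≠ 0 := (volume_cube_pos a hl).ne'

lemma volume_cube_ne_top (a : Fin n → ℝ) (l : ℝ) : volume (cube a l) ≠ ∞ :=
  (volume_cube_lt_top a l).ne

/-- lower corner of the `v`-child of `cube a l` -/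
noncomputable def childC (a : Fin n → ℝ) (l : ℝ) (v : Fin n → Bool) : Fin n → ℝ :=
  fun i => a i + if v i then l / 2 else 0

lemma child_subset (a : Fin n → ℝ) {l : ℝ} (hl : 0 ≤ l) (v : Fin n → Bool) :
    cube (childC a l v) (l / 2) ⊆ cube a l := by
  intro x hx
  rw [mem_cube] at hx ⊢
  intro i
  obtain ⟨h1, h2⟩ := hx i
  simp only [childC] at h1 h2
  split_ifs at h1 h2 <;> constructor <;> linarith

lemma volume_cube_child (a b : Fin n → ℝ) (l : ℝ) :
    volume (cube a l) = 2 ^ n * volume (cube b (l / 2)) := by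
  rw [volume_cube, volume_cube, ← mul_pow]
  congr 1
  rw [← ENNReal.ofReal_ofNat, ← ENNReal.ofReal_mul (by norm_num)]
  congr 1
  ring

/-- hyperplanes are null -/
lemma volume_eq_zero_hyperplane (i : Fin n) (c : ℝ) :
    volume {x : Fin n → ℝ | x i = c} = 0 := by
  have : {x : Fin n → ℝ | x i = c} = Set.pi Set.univ (fun j => if j = i then {c} else Set.univ) := by
    ext x
    simp only [Set.mem_setOf_eq, Set.mem_pi, Set.mem_univ, forall_true_left]
    constructor
    · intro h j; by_cases hj : j = i <;> simp [hj, h]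
    · intro h; simpa using h i
  rw [this, volume_pi_pi]
  exact Finset.prod_eq_zero (Finset.mem_univ i) (by simp)

lemma children_aedisjoint (a : Fin n → ℝ) (l : ℝ) {v w : Fin n → Bool} (hvw : v ≠ w) :
    volume (cube (childC a l v) (l / 2) ∩ cube (childC a l w) (l / 2)) = 0 := by
  obtain ⟨i, hi⟩ := Function.ne_iff.1 hvw
  have hsub : cube (childC a l v) (l / 2) ∩ cube (childC a l w) (l / 2) ⊆
      {x : Fin n → ℝ | x i = a i + l / 2} := by
    rintro x ⟨hv, hw⟩
    rw [mem_cube] at hv hw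
    obtain ⟨h1, h2⟩ := hv i
    obtain ⟨h3, h4⟩ := hw i
    simp only [childC] at h1 h2 h3 h4
    simp only [Set.mem_setOf_eq]
    cases hb : v i <;> cases hb' : w i <;> rw [hb] at h1 h2 <;> rw [hb'] at h3 h4 <;>
      norm_num at h1 h2 h3 h4
    · exact absurd (hb.trans hb'.symm) hi
    · linarith
    · linarith
    · exact absurd (hb.trans hb'.symm) hi
  exact measure_mono_null hsub (volume_eq_zero_hyperplane i (a i + l / 2))

/-- the canonical child containing `x`. -/
noncomputable def selv (a : Fin n → ℝ) (l : ℝ) (x : Fin n → ℝ) : Fin n → Bool :=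
  fun i => decide (a i + l / 2 ≤ x i)

lemma mem_child_selv {a : Fin n → ℝ} {l : ℝ} {x : Fin n → ℝ} (hx : x ∈ cube a l) :
    x ∈ cube (childC a l (selv a l x)) (l / 2) := by
  rw [mem_cube] at hx ⊢
  intro i
  obtain ⟨h1, h2⟩ := hx i
  simp only [childC, selv]
  show (a i + (if selv a l x i = true then l / 2 else 0)) ≤ x i ∧
    x i ≤ (a i + (if selv a l x i = true then l / 2 else 0)) + l / 2
  by_cases h : a i + l / 2 ≤ x i
  · rw [if_pos (by simpa [selv] using h)]
    constructor <;> linarith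
  · rw [if_neg (by simpa [selv] using h)]
    constructor <;> linarith

/-! ### Dyadic subcubes indexed by lists -/

noncomputable def dyadic (a : Fin n → ℝ) (l : ℝ) : List (Fin n → Bool) → (Fin n → ℝ) × ℝ
  | [] => (a, l)
  | v :: w => dyadic (childC a l v) (l / 2) w

@[simp] lemma dyadic_nil (a : Fin n → ℝ) (l : ℝ) : dyadic a l [] = (a, l) := rfl

@[simp] lemma dyadic_cons (a : Fin n → ℝ) (l : ℝ) (v : Fin n → Bool) (w : List (Fin n → Bool)) :
    dyadic a l (v :: w) = dyadic (childC a l v) (l / 2) w := rfl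

lemma dyadic_append (w u : List (Fin n → Bool)) : ∀ (a : Fin n → ℝ) (l : ℝ),
    dyadic a l (w ++ u) = dyadic (dyadic a l w).1 (dyadic a l w).2 u := by
  induction w with
  | nil => intro a l; rfl
  | cons v t ih => intro a l; simp only [List.cons_append, dyadic_cons, ih]

lemma dyadic_snd (w : List (Fin n → Bool)) : ∀ (a : Fin n → ℝ) (l : ℝ),
    (dyadic a l w).2 = l / 2 ^ w.length := by
  induction w with
  | nil => intro a l; simp
  | cons v t ih =>
      intro a l
      simp only [dyadic_cons, ih, List.length_cons, pow_succ]
      ring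

noncomputable def dyCube (a : Fin n → ℝ) (l : ℝ) (w : List (Fin n → Bool)) : Set (Fin n → ℝ) :=
  cube (dyadic a l w).1 (dyadic a l w).2

@[simp] lemma dyCube_nil (a : Fin n → ℝ) (l : ℝ) : dyCube a l [] = cube a l := rfl

lemma dyCube_side_pos {l : ℝ} (hl : 0 < l) (a : Fin n → ℝ) (w : List (Fin n → Bool)) :
    0 < (dyadic a l w).2 := by
  rw [dyadic_snd]
  positivity

lemma dyCube_cons (a : Fin n → ℝ) (l : ℝ) (v : Fin n → Bool) (w : List (Fin n → Bool)) :
    dyCube a l (v :: w) = dyCube (childC a l v) (l / 2) w := rfl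

lemma dyCube_subset {l : ℝ} (hl : 0 ≤ l) (a : Fin n → ℝ) :
    ∀ (w : List (Fin n → Bool)), dyCube a l w ⊆ cube a l := by
  intro w
  induction w generalizing a l with
  | nil => exact subset_rfl
  | cons v t ih =>
      rw [dyCube_cons]
      exact (ih (by linarith) (childC a l v)).trans (child_subset a hl v)

lemma dyCube_concat (a : Fin n → ℝ) (l : ℝ) (w : List (Fin n → Bool)) (v : Fin n → Bool) :
    dyCube a l (w ++ [v]) =
      cube (childC (dyadic a l w).1 (dyadic a l w).2 v) ((dyadic a l w).2 / 2) := by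
  rw [dyCube, dyadic_append]
  rfl

lemma dyCube_aedisjoint : ∀ (w₁ w₂ : List (Fin n → Bool)) (a : Fin n → ℝ) (l : ℝ),
    0 ≤ l → ∀ (_ : ¬ w₁ <+: w₂) (_ : ¬ w₂ <+: w₁),
    volume (dyCube a l w₁ ∩ dyCube a l w₂) = 0 := by
  intro w₁
  induction w₁ with
  | nil => intro w₂ a l hl h1 h2; exact absurd (List.nil_prefix) h1
  | cons v₁ t₁ ih =>
      intro w₂ a l hl h1 h2
      match w₂ with
      | [] => exact absurd (List.nil_prefix) h2
      | v₂ :: t₂ =>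
          by_cases hv : v₁ = v₂
          · subst hv
            rw [dyCube_cons, dyCube_cons]
            exact ih t₂ (childC a l v₁) (l / 2) (by linarith)
              (fun hp => h1 (List.cons_prefix_cons.2 ⟨rfl, hp⟩))
              (fun hp => h2 (List.cons_prefix_cons.2 ⟨rfl, hp⟩))
          · refine measure_mono_null (Set.inter_subset_inter ?_ ?_)
              (children_aedisjoint a l (v := v₁) (w := v₂) hv)
            · rw [dyCube_cons]; exact dyCube_subset (by linarith) _ t₁
            · rw [dyCube_cons]; exact dyCube_subset (by linarith) _ t₂

/-! ### Canonical chain of dyadic cubes through a point -/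

noncomputable def chainAddr (a : Fin n → ℝ) (l : ℝ) (x : Fin n → ℝ) : ℕ → List (Fin n → Bool)
  | 0 => []
  | k + 1 =>
      let w := chainAddr a l x k
      w ++ [selv (dyadic a l w).1 (dyadic a l w).2 x]

@[simp] lemma chainAddr_length (a : Fin n → ℝ) (l : ℝ) (x : Fin n → ℝ) (k : ℕ) :
    (chainAddr a l x k).length = k := by
  induction k with
  | zero => rfl
  | succ k ih => simp [chainAddr, ih]

lemma chainAddr_prefix (a : Fin n → ℝ) (l : ℝ) (x : Fin n → ℝ) {j k : ℕ} (h : j ≤ k) :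
    chainAddr a l x j <+: chainAddr a l x k := by
  induction k with
  | zero => simp_all
  | succ k ih =>
      rcases Nat.lt_or_ge j (k+1) with h' | h'
      · exact (ih (Nat.lt_succ_iff.1 h')).trans ⟨_, rfl⟩
      · have : j = k + 1 := le_antisymm h h'
        subst this
        exact List.prefix_rfl

lemma chainAddr_mem {a : Fin n → ℝ} {l : ℝ} {x : Fin n → ℝ} (hx : x ∈ cube a l) (k : ℕ) :
    x ∈ dyCube a l (chainAddr a l x k) := by
  induction k with
  | zero => exact hx
  | succ k ih =>
      show x ∈ dyCube a l (chainAddr a l x k ++ [_])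
      rw [dyCube_concat]
      exact mem_child_selv ih

lemma prefix_chainAddr_eq (a : Fin n → ℝ) (l : ℝ) (x : Fin n → ℝ) {u : List (Fin n → Bool)}
    {k : ℕ} (h : u <+: chainAddr a l x k) : u = chainAddr a l x u.length := by
  induction k with
  | zero =>
      have : u = [] := List.prefix_nil.1 h
      simp [this, chainAddr]
  | succ k ih =>
      rcases List.prefix_concat_iff.1 h with h' | h'
      · have hlen : u.length = k + 1 := by
          rw [h']
          have := chainAddr_length a l x (k+1)
          simpa [chainAddr] using this
        rw [hlen, h']
        rfl
      · exact ih h'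

/-! ### Averages -/

variable {f : (Fin n → ℝ) → ℝ}

lemma integrableOn_cube (hf : LocallyIntegrable f volume) (a : Fin n → ℝ) (l : ℝ) :
    IntegrableOn f (cube a l) volume :=
  hf.integrableOn_isCompact isCompact_Icc

lemma integrableOn_abs_sub (hf : LocallyIntegrable f volume) (c : ℝ) (a : Fin n → ℝ) (l : ℝ) :
    IntegrableOn (fun x => |f x - c|) (cube a l) volume :=
  ((integrableOn_cube hf a l).sub (integrableOn_const (volume_cube_lt_top a l).ne)).abs

lemma abs_avg_sub_le {s : Set (Fin n → ℝ)} (h0 : volume s ≠ 0) (ht : volume s ≠ ⊤)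
    (hint : IntegrableOn f s volume) (c : ℝ) :
    |(⨍ x in s, f x) - c| ≤ ⨍ x in s, |f x - c| := by
  have hτ : 0 < (volume s).toReal := ENNReal.toReal_pos h0 ht
  have hc : IntegrableOn (fun _ => c) s volume := integrableOn_const ht
  rw [setAverage_eq, setAverage_eq, smul_eq_mul, smul_eq_mul, measureReal_def]
  have h1 : ∫ x in s, (f x - c) = (∫ x in s, f x) - (volume s).toReal * c := by
    rw [integral_sub hint hc, setIntegral_const, smul_eq_mul, measureReal_def]
  have h2 : |∫ x in s, (f x - c)| ≤ ∫ x in s, |f x - c| := by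
    simpa [Real.norm_eq_abs] using
      norm_integral_le_integral_norm (μ := volume.restrict s) (fun x => f x - c)
  have h3 : (volume s).toReal⁻¹ * (∫ x in s, f x) - c
      = (volume s).toReal⁻¹ * ((∫ x in s, f x) - (volume s).toReal * c) := by
    field_simp
  rw [h3, ← h1, abs_mul, abs_of_nonneg (by positivity : (0:ℝ) ≤ (volume s).toReal⁻¹)]
  exact mul_le_mul_of_nonneg_left h2 (by positivity)

lemma avg_abs_nonneg (s : Set (Fin n → ℝ)) (c : ℝ) : 0 ≤ ⨍ x in s, |f x - c| := by
  rw [setAverage_eq, smul_eq_mul]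
  have : 0 ≤ ∫ x in s, |f x - c| := integral_nonneg (fun x => abs_nonneg _)
  positivity

lemma integral_eq_avg_mul {s : Set (Fin n → ℝ)} (h0 : volume s ≠ 0) (ht : volume s ≠ ⊤)
    (g : (Fin n → ℝ) → ℝ) :
    ∫ x in s, g x = (volume s).toReal * ⨍ x in s, g x := by
  rw [setAverage_eq, smul_eq_mul, measureReal_def, ← mul_assoc, mul_inv_cancel₀ (ENNReal.toReal_pos h0 ht).ne',
    one_mul]

/-- child-to-parent average comparison for nonnegative integrands -/
lemma avg_child_le {a : Fin n → ℝ} {l : ℝ} (hl : 0 < l) (v : Fin n → Bool) {c : ℝ}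
    (hint : IntegrableOn (fun x => |f x - c|) (cube a l) volume) :
    ⨍ x in cube (childC a l v) (l/2), |f x - c| ≤ 2^n * ⨍ x in cube a l, |f x - c| := by
  have hl2 : (0:ℝ) < l / 2 := by linarith
  have hvolp : volume (cube a l) = 2^n * volume (cube (childC a l v) (l/2)) :=
    volume_cube_child a (childC a l v) l
  have hτc : 0 < (volume (cube (childC a l v) (l/2))).toReal :=
    ENNReal.toReal_pos (volume_cube_ne_zero _ hl2) (volume_cube_ne_top _ _)
  have hτp : 0 < (volume (cube a l)).toReal :=
    ENNReal.toReal_pos (volume_cube_ne_zero _ hl) (volume_cube_ne_top _ _)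
  have hτ : (volume (cube a l)).toReal = 2^n * (volume (cube (childC a l v) (l/2))).toReal := by
    rw [hvolp, ENNReal.toReal_mul]
    norm_num
  have hIle : ∫ x in cube (childC a l v) (l/2), |f x - c| ≤ ∫ x in cube a l, |f x - c| := by
    refine setIntegral_mono_set hint (Filter.Eventually.of_forall (fun x => abs_nonneg _)) ?_
    exact Filter.Eventually.of_forall (child_subset a hl.le v)
  rw [setAverage_eq, setAverage_eq, smul_eq_mul, smul_eq_mul, measureReal_def, measureReal_def, hτ]
  rw [div_eq_mul_inv] at *
  calc (volume (cube (childC a l v) (l*2⁻¹))).toReal⁻¹ * ∫ x in cube (childC a l v) (l*2⁻¹), |f x - c|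
      ≤ (volume (cube (childC a l v) (l*2⁻¹))).toReal⁻¹ * ∫ x in cube a l, |f x - c| := by
        exact mul_le_mul_of_nonneg_left hIle (by positivity)
    _ = 2^n * ((2^n * (volume (cube (childC a l v) (l*2⁻¹))).toReal)⁻¹ * ∫ x in cube a l, |f x - c|) := by
        rw [mul_inv, ← mul_assoc, ← mul_assoc, mul_inv_cancel₀ (by positivity : ((2:ℝ)^n) ≠ 0),
          one_mul]

/-! ### Differentiation along the canonical dyadic chain -/

lemma ae_le_of_chain_avg_le (hf : LocallyIntegrable f volume) (a : Fin n → ℝ) {l : ℝ}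
    (hl : 0 < l) (c C2 : ℝ) :
    ∀ᵐ x, x ∈ cube a l →
      (∀ k : ℕ, ⨍ y in dyCube a l (chainAddr a l x k), |f y - c| ≤ C2) → |f x - c| ≤ C2 := by
  filter_upwards [IsUnifLocDoublingMeasure.ae_tendsto_average (μ := volume) hf 1]
    with x hx hxQ havg
  set w : ℕ → (Fin n → ℝ) := fun k =>
    fun i => (dyadic a l (chainAddr a l x k)).1 i + (dyadic a l (chainAddr a l x k)).2 / 2
    with hw
  set δ : ℕ → ℝ := fun k => (dyadic a l (chainAddr a l x k)).2 / 2 with hδdef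
  have hball : ∀ k, dyCube a l (chainAddr a l x k) = closedBall (w k) (δ k) := fun k =>
    cube_eq_closedBall _ (dyCube_side_pos hl a _).le
  have hδpos : ∀ k, 0 < δ k := fun k => by
    have := dyCube_side_pos hl a (chainAddr a l x k)
    simp only [hδdef]
    positivity
  have hδeq : δ = fun k => (l / 2) * (2⁻¹) ^ k := by
    funext k
    simp only [hδdef, dyadic_snd, chainAddr_length]
    rw [inv_pow]
    field_simp
  have hδ : Tendsto δ atTop (𝓝[>] 0) := by
    refine tendsto_nhdsWithin_of_tendsto_nhds_of_eventually_within _ ?_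
      (Filter.Eventually.of_forall (fun k => hδpos k))
    rw [hδeq]
    have := (tendsto_pow_atTop_nhds_zero_of_lt_one (by norm_num : (0:ℝ) ≤ 2⁻¹)
      (by norm_num : (2⁻¹:ℝ) < 1)).const_mul (l/2)
    simpa using this
  have hmem : ∀ k, x ∈ closedBall (w k) (1 * δ k) := by
    intro k
    rw [one_mul, ← hball k]
    exact chainAddr_mem hxQ k
  have htend : Tendsto (fun k => ⨍ y in closedBall (w k) (δ k), f y) atTop (𝓝 (f x)) :=
    hx w δ hδ (Filter.Eventually.of_forall hmem)
  have hperk : ∀ k, |(⨍ y in closedBall (w k) (δ k), f y) - c| ≤ C2 := by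
    intro k
    rw [← hball k]
    refine le_trans (abs_avg_sub_le ?_ ?_ ?_ c) (havg k)
    · exact volume_cube_ne_zero _ (dyCube_side_pos hl a _)
    · exact volume_cube_ne_top _ _
    · exact integrableOn_cube hf _ _
  exact le_of_tendsto ((htend.sub_const c).abs) (Filter.Eventually.of_forall hperk)

end JN

namespace JN2
open JN
variable {n : ℕ} {f : (Fin n → ℝ) → ℝ}

theorem distribution (hf : LocallyIntegrable f volume)
    (hb : ∀ (b : Fin n → ℝ) (m : ℝ), 0 < m →
      (⨍ x in cube b m, |f x - ⨍ y in cube b m, f y|) ≤ 1) :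
    ∀ (k : ℕ) (a : Fin n → ℝ) (l : ℝ), 0 < l →
      volume {x ∈ cube a l | ((2:ℝ)^(n+1) + 2) * k < |f x - ⨍ y in cube a l, f y|}
        ≤ 2⁻¹ ^ k * volume (cube a l) := by
  intro k
  induction k with
  | zero =>
      intro a l hl
      simpa using measure_mono (Set.sep_subset (cube a l) _)
  | succ k ih =>
      intro a l hl
      classical
      set Q := cube a l with hQ
      set c : ℝ := ⨍ y in Q, f y with hc
      set M : ℝ := (2:ℝ)^(n+1) + 2 with hM
      have hM2 : (2:ℝ) < M := by
        have : (0:ℝ) < 2^(n+1) := by positivity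
        rw [hM]; linarith
      -- the stopping family
      set S : Set (List (Fin n → Bool)) :=
        {w | 2 < (⨍ y in dyCube a l w, |f y - c|) ∧
          ∀ u, u <+: w → u ≠ w → (⨍ y in dyCube a l u, |f y - c|) ≤ 2} with hS
      have hroot : (⨍ y in dyCube a l [], |f y - c|) ≤ 1 := by
        simpa [hc, hQ] using hb a l hl
      -- basic facts about dyadic cubes
      have hside : ∀ w : List (Fin n → Bool), 0 < (dyadic a l w).2 :=
        fun w => dyCube_side_pos hl a w
      have h0 : ∀ w : List (Fin n → Bool), volume (dyCube a l w) ≠ 0 :=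
        fun w => volume_cube_ne_zero _ (hside w)
      have hT : ∀ w : List (Fin n → Bool), volume (dyCube a l w) ≠ ⊤ :=
        fun w => volume_cube_ne_top _ _
      have hint : ∀ w : List (Fin n → Bool), IntegrableOn (fun x => |f x - c|) (dyCube a l w) volume :=
        fun w => integrableOn_abs_sub hf c _ _
      have hintf : ∀ w : List (Fin n → Bool), IntegrableOn f (dyCube a l w) volume :=
        fun w => integrableOn_cube hf _ _
      -- stopped cubes have average at most 2^(n+1)
      have hP2 : ∀ w ∈ S, (⨍ y in dyCube a l w, |f y - c|) ≤ 2^(n+1) := by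
        intro w hw
        rcases List.eq_nil_or_concat' w with rfl | ⟨u, v, rfl⟩
        · exact absurd (lt_of_lt_of_le hw.1 hroot) (by norm_num)
        · have hu : (⨍ y in dyCube a l u, |f y - c|) ≤ 2 := by
            refine hw.2 u ⟨[v], rfl⟩ ?_
            simp
          have := avg_child_le (a := (dyadic a l u).1) (l := (dyadic a l u).2) (hside u) v
            (hint u)
          rw [← dyCube_concat] at this
          calc (⨍ y in dyCube a l (u ++ [v]), |f y - c|)
              ≤ 2^n * ⨍ y in dyCube a l u, |f y - c| := by
                simpa [dyCube] using this
            _ ≤ 2^n * 2 := by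
                have : (0:ℝ) < 2^n := by positivity
                nlinarith
            _ = 2^(n+1) := by ring
      -- elements of S are mutually non-prefix, hence a.e. disjoint
      have hSdisj : ∀ w₁ ∈ S, ∀ w₂ ∈ S, w₁ ≠ w₂ →
          volume (dyCube a l w₁ ∩ dyCube a l w₂) = 0 := by
        intro w₁ h₁ w₂ h₂ hne
        have hnp : ∀ u ∈ S, ∀ w ∈ S, u ≠ w → ¬ u <+: w := by
          intro u hu w hw hne' hp
          exact absurd hu.1 (not_lt.2 (hw.2 u hp hne'))
        exact dyCube_aedisjoint w₁ w₂ a l hl.le (hnp w₁ h₁ w₂ h₂ hne)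
          (hnp w₂ h₂ w₁ h₁ hne.symm)
      set Bad : Set (Fin n → ℝ) := ⋃ (w : ↥S), dyCube a l ↑w with hBad
      -- each stopped cube is charged by the integral
      have hptw : ∀ w ∈ S, volume (dyCube a l w) ≤
          2⁻¹ * ∫⁻ y in dyCube a l w, ENNReal.ofReal |f y - c| := by
        intro w hw
        have hτ : 0 < (volume (dyCube a l w)).toReal := ENNReal.toReal_pos (h0 w) (hT w)
        have hIeq : ∫ y in dyCube a l w, |f y - c| =
            (volume (dyCube a l w)).toReal * ⨍ y in dyCube a l w, |f y - c| :=
          integral_eq_avg_mul (h0 w) (hT w) _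
        have hIge : 2 * (volume (dyCube a l w)).toReal ≤ ∫ y in dyCube a l w, |f y - c| := by
          rw [hIeq]
          have := hw.1
          nlinarith
        have hlin : ∫⁻ y in dyCube a l w, ENNReal.ofReal |f y - c|
            = ENNReal.ofReal (∫ y in dyCube a l w, |f y - c|) :=
          (ofReal_integral_eq_lintegral_ofReal (hint w)
            (Filter.Eventually.of_forall (fun y => abs_nonneg _))).symm
        have h2v : 2 * volume (dyCube a l w) ≤
            ∫⁻ y in dyCube a l w, ENNReal.ofReal |f y - c| := by
          rw [hlin]
          calc 2 * volume (dyCube a l w)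
              = ENNReal.ofReal (2 * (volume (dyCube a l w)).toReal) := by
                rw [ENNReal.ofReal_mul (by norm_num)]
                rw [ENNReal.ofReal_toReal (hT w)]
                norm_num
            _ ≤ ENNReal.ofReal (∫ y in dyCube a l w, |f y - c|) :=
                ENNReal.ofReal_le_ofReal hIge
        calc volume (dyCube a l w) = 2⁻¹ * (2 * volume (dyCube a l w)) := by
              rw [← mul_assoc, ENNReal.inv_mul_cancel (by norm_num) (by norm_num), one_mul]
          _ ≤ 2⁻¹ * ∫⁻ y in dyCube a l w, ENNReal.ofReal |f y - c| :=
              mul_le_mul_right h2v _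
      -- total size of the stopped cubes
      have hBadsum : ∑' (w : ↥S), volume (dyCube a l ↑w) ≤ 2⁻¹ * volume Q := by
        have hQint : ∫⁻ y in Q, ENNReal.ofReal |f y - c| ≤ volume Q := by
          have hlin : ∫⁻ y in Q, ENNReal.ofReal |f y - c|
              = ENNReal.ofReal (∫ y in Q, |f y - c|) :=
            (ofReal_integral_eq_lintegral_ofReal (integrableOn_abs_sub hf c a l)
              (Filter.Eventually.of_forall (fun y => abs_nonneg _))).symm
          have hτ : 0 < (volume Q).toReal :=
            ENNReal.toReal_pos (volume_cube_ne_zero _ hl) (volume_cube_ne_top _ _)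
          have hIQ : ∫ y in Q, |f y - c| ≤ (volume Q).toReal := by
            have h1 : (⨍ x in Q, |f x - c|) ≤ 1 := hb a l hl
            have h2 : ∫ y in Q, |f y - c| = (volume Q).toReal * ⨍ x in Q, |f x - c| :=
              integral_eq_avg_mul (s := Q) (volume_cube_ne_zero _ hl) (volume_cube_ne_top _ _) _
            nlinarith
          rw [hlin]
          calc ENNReal.ofReal (∫ y in Q, |f y - c|) ≤ ENNReal.ofReal (volume Q).toReal :=
                ENNReal.ofReal_le_ofReal hIQ
            _ = volume Q := ENNReal.ofReal_toReal (volume_cube_ne_top _ _)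
        calc ∑' (w : ↥S), volume (dyCube a l ↑w)
            ≤ ∑' (w : ↥S), 2⁻¹ * ∫⁻ y in dyCube a l ↑w, ENNReal.ofReal |f y - c| :=
              ENNReal.tsum_le_tsum (fun w => hptw ↑w w.2)
          _ = 2⁻¹ * ∑' (w : ↥S), ∫⁻ y in dyCube a l ↑w, ENNReal.ofReal |f y - c| :=
              ENNReal.tsum_mul_left
          _ = 2⁻¹ * ∫⁻ y in ⋃ (w : ↥S), dyCube a l ↑w, ENNReal.ofReal |f y - c| := by
              rw [lintegral_iUnion₀ (s := fun w : S => dyCube a l (w : List (Fin n → Bool)))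
                (fun w => (measurableSet_cube _ _).nullMeasurableSet)
                (fun w₁ w₂ hne => hSdisj _ w₁.2 _ w₂.2 (Subtype.coe_injective.ne hne))]
          _ ≤ 2⁻¹ * ∫⁻ y in Q, ENNReal.ofReal |f y - c| := by
              refine mul_le_mul_right (lintegral_mono_set ?_) _
              exact Set.iUnion_subset (fun w => dyCube_subset hl.le a ↑w)
          _ ≤ 2⁻¹ * volume Q := mul_le_mul_right hQint _
      -- a.e. on the good region, |f - c| ≤ 2
      have hGoodnull : volume ((Q \ Bad) ∩ {x | 2 < |f x - c|}) = 0 := by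
        have hchain : ∀ x, x ∈ Q \ Bad →
            ∀ m : ℕ, (⨍ y in dyCube a l (chainAddr a l x m), |f y - c|) ≤ 2 := by
          rintro x ⟨hxQ, hxB⟩ m
          by_contra hgt
          push_neg at hgt
          have hex : ∃ j, 2 < ⨍ y in dyCube a l (chainAddr a l x j), |f y - c| := ⟨m, hgt⟩
          have hK := Nat.find_spec hex
          have hwS : chainAddr a l x (Nat.find hex) ∈ S := by
            refine ⟨hK, ?_⟩
            intro u hu hne
            have hu' : u = chainAddr a l x u.length := prefix_chainAddr_eq a l x hu
            have hlt : u.length < Nat.find hex := by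
              have hle : u.length ≤ Nat.find hex := by
                simpa using hu.length_le
              rcases lt_or_eq_of_le hle with h | h
              · exact h
              · exact absurd (by rw [hu', h]) hne
            have := Nat.find_min hex hlt
            rw [hu']
            exact not_lt.1 (by simpa using this)
          exact hxB (Set.mem_iUnion.2 ⟨⟨_, hwS⟩, chainAddr_mem hxQ (Nat.find hex)⟩)
        have hae := ae_le_of_chain_avg_le hf a hl c 2
        refine measure_mono_null ?_ (ae_iff.1 hae)
        rintro x ⟨⟨hxQ, hxB⟩, hx2⟩
        simp only [Set.mem_setOf_eq, not_forall, Classical.not_imp]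
        exact ⟨hxQ, hchain x ⟨hxQ, hxB⟩, not_le.2 hx2⟩
      -- covering of the level set
      have hcover : {x ∈ Q | M * (k+1 : ℕ) < |f x - c|} ⊆
          ((Q \ Bad) ∩ {x | 2 < |f x - c|}) ∪
            ⋃ (w : ↥S), {x ∈ dyCube a l ↑w |
              M * k < |f x - ⨍ y in dyCube a l ↑w, f y|} := by
        rintro x ⟨hxQ, hxg⟩
        push_cast at hxg
        have hMk0 : (0:ℝ) ≤ M * k := by
          have : (0:ℝ) ≤ (k:ℝ) := Nat.cast_nonneg k
          nlinarith
        by_cases hxB : x ∈ Bad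
        · right
          obtain ⟨w, hxw⟩ := Set.mem_iUnion.1 hxB
          refine Set.mem_iUnion.2 ⟨w, hxw, ?_⟩
          have h1 : |(⨍ y in dyCube a l ↑w, f y) - c| ≤ 2^(n+1) :=
            (abs_avg_sub_le (h0 ↑w) (hT ↑w) (hintf ↑w) c).trans (hP2 ↑w w.2)
          have htri : |f x - c| ≤ |f x - ⨍ y in dyCube a l ↑w, f y| +
              |(⨍ y in dyCube a l ↑w, f y) - c| := abs_sub_le _ _ _
          have hMe : M * ((k:ℝ)+1) = M * k + 2^(n+1) + 2 := by rw [hM]; ring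
          linarith
        · refine Or.inl ⟨⟨hxQ, hxB⟩, ?_⟩
          simp only [Set.mem_setOf_eq]
          linarith
      -- put everything together
      calc volume {x ∈ Q | M * ((k+1 : ℕ) : ℝ) < |f x - c|}
          ≤ volume (((Q \ Bad) ∩ {x | 2 < |f x - c|}) ∪
              ⋃ (w : ↥S), {x ∈ dyCube a l ↑w |
                M * k < |f x - ⨍ y in dyCube a l ↑w, f y|}) :=
            measure_mono hcover
        _ ≤ volume ((Q \ Bad) ∩ {x | 2 < |f x - c|}) +
              volume (⋃ (w : ↥S), {x ∈ dyCube a l ↑w |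
                M * k < |f x - ⨍ y in dyCube a l ↑w, f y|}) := measure_union_le _ _
        _ ≤ 0 + ∑' (w : ↥S), volume {x ∈ dyCube a l ↑w |
                M * k < |f x - ⨍ y in dyCube a l ↑w, f y|} := by
            rw [hGoodnull]
            exact add_le_add le_rfl (measure_iUnion_le _)
        _ ≤ ∑' (w : ↥S), 2⁻¹ ^ k * volume (dyCube a l ↑w) := by
            rw [zero_add]
            exact ENNReal.tsum_le_tsum (fun w => ih (dyadic a l ↑w).1 (dyadic a l ↑w).2
              (hside ↑w))
        _ = 2⁻¹ ^ k * ∑' (w : ↥S), volume (dyCube a l ↑w) := ENNReal.tsum_mul_left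
        _ ≤ 2⁻¹ ^ k * (2⁻¹ * volume Q) := mul_le_mul_right hBadsum _
        _ = 2⁻¹ ^ (k+1) * volume Q := by rw [pow_succ, mul_assoc]

end JN2

open JN

/-- arithmetic layer decomposition -/
lemma pointwise_layer {M g : ℝ} (hM : 2 < M) (K : ℕ) (hg : ¬ g ≤ M * ((K:ℝ)+2)) :
    ∃ d : ℕ, (g ≤ M*((K:ℝ)+2) + M*(d:ℝ)) ∧ ∀ j : ℕ, j < d → M * ((K:ℝ)+1+(j:ℝ)) < g := by
  push_neg at hg
  have hM0 : (0:ℝ) < M := by linarith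
  have hgpos : 0 < g := lt_trans (by positivity) hg
  set m : ℕ := ⌊g / M⌋₊ with hm
  have hmle : (m:ℝ) ≤ g / M := Nat.floor_le (by positivity)
  have hmlt : g / M < (m:ℝ) + 1 := Nat.lt_floor_add_one _
  have h1 : M * (m:ℝ) ≤ g := by
    rw [le_div_iff₀ hM0] at hmle
    linarith [hmle]
  have h2 : g < M * ((m:ℝ) + 1) := by
    rw [div_lt_iff₀ hM0] at hmlt
    linarith [hmlt]
  have hKm : K + 2 ≤ m := by
    have : ((K:ℝ)+2) < (m:ℝ) + 1 := by
      have := lt_trans hg h2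
      exact lt_of_mul_lt_mul_left this hM0.le
    have : ((K:ℝ)+1) < (m:ℝ) := by linarith
    exact_mod_cast by
      have : ((K+1 : ℕ):ℝ) < (m:ℝ) := by push_cast; linarith
      exact_mod_cast Nat.succ_le_of_lt (by exact_mod_cast this)
  refine ⟨m - (K+1), ?_, ?_⟩
  · have hcast : ((m - (K+1) : ℕ):ℝ) = (m:ℝ) - (K:ℝ) - 1 := by
      rw [Nat.cast_sub (by omega)]
      push_cast
      ring
    rw [hcast]
    nlinarith
  · intro j hj
    have hj' : (K + 1 + j) + 1 ≤ m := by omega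
    have : ((K + 1 + j : ℕ):ℝ) + 1 ≤ (m:ℝ) := by exact_mod_cast hj'
    have hle : M * ((K:ℝ)+1+(j:ℝ)) ≤ M * ((m:ℝ) - 1) := by
      have : (K:ℝ)+1+(j:ℝ) ≤ (m:ℝ) - 1 := by push_cast at this ⊢; linarith
      nlinarith
    nlinarith

theorem main_measurable {n : ℕ} {f : (Fin n → ℝ) → ℝ} (hf : LocallyIntegrable f volume)
    (hfm : StronglyMeasurable f)
    (hb : ∀ (b : Fin n → ℝ) (m : ℝ), 0 < m →
      (⨍ x in cube b m, |f x - ⨍ y in cube b m, f y|) ≤ 1)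
    (a : Fin n → ℝ) (l : ℝ) (hl : 0 < l) (A : Set (Fin n → ℝ)) (hA : MeasurableSet A)
    (hAQ : A ⊆ cube a l) (hA0 : 0 < volume A) :
    (⨍ x in A, |f x - ⨍ y in cube a l, f y|) ≤
      (4 * ((2:ℝ)^(n+1) + 2)) *
        (1 + Real.log ((volume (cube a l)).toReal / (volume A).toReal)) := by
  classical
  set c : ℝ := ⨍ y in cube a l, f y with hc
  set M : ℝ := (2:ℝ)^(n+1) + 2 with hM
  have hM2 : (2:ℝ) < M := by
    have : (0:ℝ) < 2^(n+1) := by positivity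
    rw [hM]; linarith
  have hM0 : (0:ℝ) < M := by linarith
  set q : ℝ := (volume (cube a l)).toReal with hqdef
  set α : ℝ := (volume A).toReal with hαdef
  have hAfin : volume A ≠ ⊤ :=
    (lt_of_le_of_lt (measure_mono hAQ) (volume_cube_lt_top a l)).ne
  have hα : 0 < α := ENNReal.toReal_pos hA0.ne' hAfin
  have hq : 0 < q := ENNReal.toReal_pos (volume_cube_ne_zero a hl) (volume_cube_ne_top a l)
  have hαq : α ≤ q := by
    rw [hαdef, hqdef]
    exact ENNReal.toReal_le_toReal hAfin (volume_cube_ne_top a l) |>.2 (measure_mono hAQ)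
  have hAof : volume A = ENNReal.ofReal α := (ENNReal.ofReal_toReal hAfin).symm
  have hQof : volume (cube a l) = ENNReal.ofReal q :=
    (ENNReal.ofReal_toReal (volume_cube_ne_top a l)).symm
  -- choice of K
  have hK : ∃ m : ℕ, q ≤ 2^m * α := by
    obtain ⟨m, hm⟩ := pow_unbounded_of_one_lt (q / α) (one_lt_two (α := ℝ))
    exact ⟨m, by rw [div_lt_iff₀ hα] at hm; linarith⟩
  set K : ℕ := Nat.find hK with hKdef
  have hKspec : q ≤ 2^K * α := Nat.find_spec hK
  -- level sets
  set E : ℕ → Set (Fin n → ℝ) :=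
    fun j => {x | x ∈ cube a l ∧ M * (j:ℝ) < |f x - c|} with hE
  have hEvol : ∀ j : ℕ, volume (E j) ≤ 2⁻¹ ^ j * volume (cube a l) :=
    fun j => JN2.distribution hf hb j a l hl
  have hEm : ∀ j : ℕ, MeasurableSet (E j) := fun j =>
    (measurableSet_cube a l).inter
      (measurableSet_lt measurable_const ((hfm.measurable.sub measurable_const).abs))
  -- pointwise layer-cake bound
  have hpt : ∀ x ∈ A, ENNReal.ofReal |f x - c| ≤
      ENNReal.ofReal (M*((K:ℝ)+2)) +
        ∑' (j:ℕ), (E (K+1+j)).indicator (fun _ => ENNReal.ofReal M) x := by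
    intro x hx
    by_cases hgx : |f x - c| ≤ M * ((K:ℝ)+2)
    · exact le_add_right (ENNReal.ofReal_le_ofReal hgx)
    · obtain ⟨d, hd1, hd2⟩ := pointwise_layer hM2 K hgx
      have hsum : (d:ℝ≥0∞) * ENNReal.ofReal M ≤
          ∑' (j:ℕ), (E (K+1+j)).indicator (fun _ => ENNReal.ofReal M) x := by
        have := ENNReal.sum_le_tsum (f := fun j : ℕ =>
          (E (K+1+j)).indicator (fun _ => ENNReal.ofReal M) x) (Finset.range d)
        refine le_trans ?_ this
        rw [Finset.sum_congr rfl (fun j hj => ?_)]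
        · rw [Finset.sum_const, Finset.card_range, nsmul_eq_mul]
        · refine Set.indicator_of_mem ?_ _
          refine ⟨hAQ hx, ?_⟩
          have := hd2 j (Finset.mem_range.1 hj)
          push_cast
          linarith
      calc ENNReal.ofReal |f x - c| ≤ ENNReal.ofReal (M*((K:ℝ)+2) + M*(d:ℝ)) :=
            ENNReal.ofReal_le_ofReal hd1
        _ = ENNReal.ofReal (M*((K:ℝ)+2)) + ENNReal.ofReal (M*(d:ℝ)) := by
            rw [ENNReal.ofReal_add (by positivity) (by positivity)]
        _ = ENNReal.ofReal (M*((K:ℝ)+2)) + (d:ℝ≥0∞) * ENNReal.ofReal M := by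
            congr 1
            rw [ENNReal.ofReal_mul hM0.le, ENNReal.ofReal_natCast, mul_comm]
        _ ≤ _ := add_le_add le_rfl hsum
  -- tail bound
  have htail : ∑' (j:ℕ), volume (E (K+1+j)) ≤ 2⁻¹ ^ K * volume (cube a l) := by
    calc ∑' (j:ℕ), volume (E (K+1+j))
        ≤ ∑' (j:ℕ), (2⁻¹ ^ (K+1) * volume (cube a l)) * 2⁻¹ ^ j := by
          refine ENNReal.tsum_le_tsum (fun j => ?_)
          calc volume (E (K+1+j)) ≤ 2⁻¹ ^ (K+1+j) * volume (cube a l) := hEvol (K+1+j)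
            _ = (2⁻¹ ^ (K+1) * volume (cube a l)) * 2⁻¹ ^ j := by
                rw [pow_add]; ring
      _ = (2⁻¹ ^ (K+1) * volume (cube a l)) * ∑' (j:ℕ), (2⁻¹:ℝ≥0∞) ^ j :=
          ENNReal.tsum_mul_left
      _ = 2⁻¹ ^ K * volume (cube a l) := by
          rw [ENNReal.tsum_geometric, ENNReal.one_sub_inv_two, inv_inv]
          have h12 : (2⁻¹:ℝ≥0∞) ^ (K+1) * 2 = 2⁻¹ ^ K := by
            rw [pow_succ, mul_assoc, ENNReal.inv_mul_cancel (by norm_num) (by norm_num), mul_one]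
          calc 2⁻¹ ^ (K+1) * volume (cube a l) * 2
              = (2⁻¹ ^ (K+1) * 2) * volume (cube a l) := by ring
            _ = 2⁻¹ ^ K * volume (cube a l) := by rw [h12]
  have hKvol : (2⁻¹:ℝ≥0∞) ^ K * volume (cube a l) ≤ volume A := by
    have h2 : ENNReal.ofReal q ≤ ENNReal.ofReal ((2:ℝ)^K * α) := ENNReal.ofReal_le_ofReal hKspec
    have h3 : ENNReal.ofReal ((2:ℝ)^K * α) = 2^K * volume A := by
      rw [ENNReal.ofReal_mul (by positivity), ENNReal.ofReal_pow (by norm_num), hAof]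
      norm_num
    calc (2⁻¹:ℝ≥0∞) ^ K * volume (cube a l) ≤ 2⁻¹ ^ K * (2^K * volume A) := by
          rw [hQof]; exact mul_le_mul_right (h2.trans_eq h3) _
      _ = volume A := by
          rw [← mul_assoc, ← mul_pow, ENNReal.inv_mul_cancel (by norm_num) (by norm_num),
            one_pow, one_mul]
  -- the lintegral estimate
  have hGm : Measurable fun x => ENNReal.ofReal |f x - c| :=
    ((hfm.measurable.sub measurable_const).abs).ennreal_ofReal
  have hBig : Measurable fun x => ENNReal.ofReal (M*((K:ℝ)+2)) +
      ∑' (j:ℕ), (E (K+1+j)).indicator (fun _ => ENNReal.ofReal M) x :=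
    measurable_const.add
      (Measurable.ennreal_tsum (fun j => measurable_const.indicator (hEm (K+1+j))))
  have hlint : ∫⁻ x in A, ENNReal.ofReal |f x - c| ≤
      ENNReal.ofReal (M*((K:ℝ)+3)) * volume A := by
    calc ∫⁻ x in A, ENNReal.ofReal |f x - c|
        ≤ ∫⁻ x in A, (ENNReal.ofReal (M*((K:ℝ)+2)) +
            ∑' (j:ℕ), (E (K+1+j)).indicator (fun _ => ENNReal.ofReal M) x) :=
          setLIntegral_mono hBig hpt
      _ = ENNReal.ofReal (M*((K:ℝ)+2)) * volume A +
            ∫⁻ x in A, ∑' (j:ℕ), (E (K+1+j)).indicator (fun _ => ENNReal.ofReal M) x := by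
          rw [lintegral_add_left measurable_const, setLIntegral_const]
      _ = ENNReal.ofReal (M*((K:ℝ)+2)) * volume A +
            ∑' (j:ℕ), ∫⁻ x in A, (E (K+1+j)).indicator (fun _ => ENNReal.ofReal M) x := by
          rw [lintegral_tsum (fun j => (measurable_const.indicator (hEm (K+1+j))).aemeasurable)]
      _ ≤ ENNReal.ofReal (M*((K:ℝ)+2)) * volume A +
            ∑' (j:ℕ), ENNReal.ofReal M * volume (E (K+1+j)) := by
          refine add_le_add le_rfl (ENNReal.tsum_le_tsum (fun j => ?_))
          rw [lintegral_indicator_const (hEm (K+1+j)), Measure.restrict_apply (hEm (K+1+j))]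
          exact mul_le_mul_right (measure_mono Set.inter_subset_left) _
      _ = ENNReal.ofReal (M*((K:ℝ)+2)) * volume A +
            ENNReal.ofReal M * ∑' (j:ℕ), volume (E (K+1+j)) := by rw [ENNReal.tsum_mul_left]
      _ ≤ ENNReal.ofReal (M*((K:ℝ)+2)) * volume A +
            ENNReal.ofReal M * (2⁻¹ ^ K * volume (cube a l)) :=
          add_le_add le_rfl (mul_le_mul_right htail _)
      _ ≤ ENNReal.ofReal (M*((K:ℝ)+2)) * volume A + ENNReal.ofReal M * volume A :=
          add_le_add le_rfl (mul_le_mul_right hKvol _)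
      _ = ENNReal.ofReal (M*((K:ℝ)+3)) * volume A := by
          rw [← add_mul, ← ENNReal.ofReal_add (by positivity) (by positivity)]
          congr 2
          ring
  -- back to the real integral
  have hgA : IntegrableOn (fun x => |f x - c|) A volume :=
    (integrableOn_abs_sub hf c a l).mono_set hAQ
  have hreal : ∫ x in A, |f x - c| ≤ M*((K:ℝ)+3) * α := by
    have h1 : ENNReal.ofReal (∫ x in A, |f x - c|) = ∫⁻ x in A, ENNReal.ofReal |f x - c| :=
      ofReal_integral_eq_lintegral_ofReal hgA
        (Filter.Eventually.of_forall (fun x => abs_nonneg _))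
    have h2 : ENNReal.ofReal (∫ x in A, |f x - c|) ≤ ENNReal.ofReal (M*((K:ℝ)+3) * α) := by
      rw [h1]
      calc ∫⁻ x in A, ENNReal.ofReal |f x - c| ≤ ENNReal.ofReal (M*((K:ℝ)+3)) * volume A :=
            hlint
        _ = ENNReal.ofReal (M*((K:ℝ)+3) * α) := by
            rw [hAof, ← ENNReal.ofReal_mul (by positivity)]
    exact (ENNReal.ofReal_le_ofReal_iff (by positivity)).1 h2
  have havg : (⨍ x in A, |f x - c|) ≤ M*((K:ℝ)+3) := by
    rw [setAverage_eq, smul_eq_mul, measureReal_def, ← hαdef]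
    calc α⁻¹ * ∫ x in A, |f x - c| ≤ α⁻¹ * (M*((K:ℝ)+3) * α) :=
          mul_le_mul_of_nonneg_left hreal (by positivity)
      _ = M*((K:ℝ)+3) := by field_simp
  -- bound on K
  have hlog2 : (0.6931471803:ℝ) < Real.log 2 := Real.log_two_gt_d9
  have ht1 : 1 ≤ q/α := by rw [le_div_iff₀ hα]; linarith
  have hlt : 0 ≤ Real.log (q/α) := Real.log_nonneg ht1
  have hKb : (K:ℝ) ≤ 1 + 2 * Real.log (q/α) := by
    rcases Nat.eq_zero_or_pos K with h0 | hpos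
    · rw [h0]; push_cast; linarith
    · have hm : ¬ q ≤ 2^(K-1) * α := Nat.find_min hK (Nat.sub_lt hpos one_pos)
      push_neg at hm
      have h2 : (2:ℝ)^(K-1) < q/α := by rw [lt_div_iff₀ hα]; linarith
      have h3 := Real.log_lt_log (by positivity) h2
      rw [Real.log_pow] at h3
      have hcast : ((K-1:ℕ):ℝ) = (K:ℝ) - 1 := by
        rw [Nat.cast_sub hpos]
        norm_num
      rw [hcast] at h3
      by_cases hK1 : (K:ℝ) ≤ 1
      · linarith
      · have hKm1 : (0:ℝ) < (K:ℝ) - 1 := by linarith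
        have hh : ((K:ℝ)-1) * 0.6931471803 < Real.log (q/α) := by
          calc ((K:ℝ)-1) * 0.6931471803 ≤ ((K:ℝ)-1) * Real.log 2 := by nlinarith
            _ < Real.log (q/α) := h3
        have : ((K:ℝ)-1) * 0.5 < ((K:ℝ)-1) * 0.6931471803 := by nlinarith
        linarith
  -- conclusion
  calc (⨍ x in A, |f x - c|) ≤ M*((K:ℝ)+3) := havg
    _ ≤ (4 * M) * (1 + Real.log (q/α)) := by nlinarith [hlt, hKb, hM0]

/-- there is a dimensional constant `C(n)` such that for any cube `Q`,
any measurable `A ⊆ Q` of positive measure, and any locally integrable `f` with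
`‖f‖_{BMO(ℝⁿ)} ≤ 1`, one has `(1/|A|) ∫_A |f − f_Q| ≤ C(n)(1 + log(|Q|/|A|))`. -/
theorem mean_oscillation_on_subset (n : ℕ) (hn : 1 ≤ n) :
    ∃ C : ℝ, 0 < C ∧
      ∀ (f : (Fin n → ℝ) → ℝ), LocallyIntegrable f volume → bmoN f ≤ 1 →
      ∀ (a : Fin n → ℝ) (l : ℝ), 0 < l →
      ∀ A : Set (Fin n → ℝ), MeasurableSet A → A ⊆ cube a l → 0 < volume A →
        (⨍ x in A, |f x - ⨍ y in cube a l, f y|) ≤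
          C * (1 + Real.log ((volume (cube a l)).toReal / (volume A).toReal)) := by

  refine ⟨4 * ((2:ℝ)^(n+1) + 2), by positivity, ?_⟩
  intro f hf hbmo a l hl A hA hAQ hA0
  obtain ⟨φ, hφm, hφeq⟩ : ∃ φ, StronglyMeasurable φ ∧ f =ᵐ[volume] φ :=
    ⟨hf.aestronglyMeasurable.mk f, hf.aestronglyMeasurable.stronglyMeasurable_mk,
      hf.aestronglyMeasurable.ae_eq_mk⟩
  have hφloc : LocallyIntegrable φ volume := by
    intro x
    obtain ⟨U, hU, hint⟩ := hf x
    exact ⟨U, hU, hint.congr (ae_restrict_of_ae hφeq)⟩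
  have hAvgEq : ∀ s : Set (Fin n → ℝ), (⨍ x in s, f x) = ⨍ x in s, φ x :=
    fun s => average_congr (ae_restrict_of_ae hφeq)
  have hosc : ∀ (b : Fin n → ℝ) (m : ℝ), 0 < m →
      (⨍ x in cube b m, |φ x - ⨍ y in cube b m, φ y|) ≤ 1 := by
    intro b m hm
    have h0 : ENNReal.ofReal (oscN f (cube b m)) ≤
        ⨆ (_ : 0 < m), ENNReal.ofReal (oscN f (cube b m)) := le_iSup_of_le hm le_rfl
    have h0' : (⨆ (_ : 0 < m), ENNReal.ofReal (oscN f (cube b m))) ≤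
        ⨆ (l : ℝ) (_ : 0 < l), ENNReal.ofReal (oscN f (cube b l)) :=
      le_iSup (fun l : ℝ => ⨆ (_ : 0 < l), ENNReal.ofReal (oscN f (cube b l))) m
    have h0'' : (⨆ (l : ℝ) (_ : 0 < l), ENNReal.ofReal (oscN f (cube b l))) ≤ bmoN f :=
      le_iSup (fun a : Fin n → ℝ =>
        ⨆ (l : ℝ) (_ : 0 < l), ENNReal.ofReal (oscN f (cube a l))) b
    have h1 : ENNReal.ofReal (oscN f (cube b m)) ≤ 1 :=
      le_trans (le_trans (h0.trans h0') h0'') hbmo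
    have h2 : oscN f (cube b m) ≤ 1 := ENNReal.ofReal_le_one.1 h1
    have h3 : (⨍ x in cube b m, |φ x - ⨍ y in cube b m, φ y|)
        = ⨍ x in cube b m, |f x - ⨍ y in cube b m, f y| := by
      rw [← hAvgEq (cube b m)]
      refine average_congr ?_
      filter_upwards [ae_restrict_of_ae hφeq] with x hx
      rw [hx]
    rw [h3]
    exact h2
  have hmain := main_measurable hφloc hφm hosc a l hl A hA hAQ hA0
  have hLHS : (⨍ x in A, |f x - ⨍ y in cube a l, f y|)
      = ⨍ x in A, |φ x - ⨍ y in cube a l, φ y| := by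
    rw [hAvgEq (cube a l)]
    refine average_congr ?_
    filter_upwards [ae_restrict_of_ae hφeq] with x hx
    rw [hx]
  rw [hLHS]
  exact hmain
end

section
/- There exists a dimensional constant C(n) such that for every locally integrable f on ℝⁿ and every closed axis-parallel rectangle R (a product of n closed intervals of positive length) with eccentricity e(R) (the ratio of its longest side length to its shortest side length), one has O(f,R) ≤ C(n) (1 + log e(R)) ‖f‖_{BMO(ℝⁿ)}. -/
open MeasureTheory Set Filter
open scoped ENNReal Topology

variable {n : ℕ} {f : (Fin n → ℝ) → ℝ} {A B : Set (Fin n → ℝ)}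

lemma oscN_eq : oscN f A = ((volume A).toReal)⁻¹ * ∫ x in A, |f x - ⨍ y in A, f y| := by
  rw [oscN, setAverage_eq]; rfl

lemma oscN_nonneg : 0 ≤ oscN f A := by
  rw [oscN_eq]
  exact mul_nonneg (inv_nonneg.2 ENNReal.toReal_nonneg)
    (integral_nonneg fun x => abs_nonneg _)

lemma mul_oscN (h0 : volume A ≠ 0) (ht : volume A ≠ ⊤) :
    (volume A).toReal * oscN f A = ∫ x in A, |f x - ⨍ y in A, f y| := by
  rw [oscN_eq, ← mul_assoc, mul_inv_cancel₀ (ENNReal.toReal_ne_zero.2 ⟨h0, ht⟩), one_mul]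

lemma setIntegral_sub_const (hf : IntegrableOn f A) (ht : volume A ≠ ⊤) (c : ℝ) :
    ∫ x in A, (f x - c) = (∫ x in A, f x) - (volume A).toReal * c := by
  rw [integral_sub hf (integrableOn_const ht), setIntegral_const, smul_eq_mul]
  rfl

lemma avg_sub_const (h0 : volume A ≠ 0) (ht : volume A ≠ ⊤) (hf : IntegrableOn f A) (c : ℝ) :
    (⨍ y in A, f y) - c = ((volume A).toReal)⁻¹ * ∫ x in A, (f x - c) := by
  rw [setIntegral_sub_const hf ht, setAverage_eq, smul_eq_mul, mul_sub, ← mul_assoc,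
    inv_mul_cancel₀ (ENNReal.toReal_ne_zero.2 ⟨h0, ht⟩), one_mul]
  rfl

lemma abs_avg_sub_const_le (h0 : volume A ≠ 0) (ht : volume A ≠ ⊤) (hf : IntegrableOn f A)
    (c : ℝ) : |(⨍ y in A, f y) - c| ≤ ((volume A).toReal)⁻¹ * ∫ x in A, |f x - c| := by
  rw [avg_sub_const h0 ht hf c, abs_mul, abs_inv, abs_of_nonneg (ENNReal.toReal_nonneg)]
  gcongr
  calc |∫ x in A, (f x - c)| ≤ ∫ x in A, |f x - c| := by
        simpa using norm_integral_le_integral_norm (μ := volume.restrict A) (fun x => f x - c)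

lemma int_abs_le_two (h0 : volume A ≠ 0) (ht : volume A ≠ ⊤) (hf : IntegrableOn f A) (c : ℝ) :
    ∫ x in A, |f x - ⨍ y in A, f y| ≤ 2 * ∫ x in A, |f x - c| := by
  set m := ⨍ y in A, f y with hm
  have habs : IntegrableOn (fun x => |f x - c|) A :=
    ((hf.sub (integrableOn_const ht))).abs
  have h1 : ∫ x in A, |f x - m| ≤ ∫ x in A, (|f x - c| + |c - m|) := by
    refine integral_mono ((hf.sub (integrableOn_const ht)).abs)
      (habs.add (integrableOn_const ht)) ?_
    exact fun x => abs_sub_le _ _ _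
  have h2 : ∫ x in A, (|f x - c| + |c - m|) =
      (∫ x in A, |f x - c|) + (volume A).toReal * |c - m| := by
    rw [integral_add habs (integrableOn_const ht), setIntegral_const,
      smul_eq_mul]
    rfl
  have h3 : (volume A).toReal * |c - m| ≤ ∫ x in A, |f x - c| := by
    have := abs_avg_sub_const_le h0 ht hf c
    rw [abs_sub_comm] at this
    have hv : 0 < (volume A).toReal :=
      ENNReal.toReal_pos h0 ht
    calc (volume A).toReal * |c - m| ≤
        (volume A).toReal * (((volume A).toReal)⁻¹ * ∫ x in A, |f x - c|) :=
          mul_le_mul_of_nonneg_left this hv.le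
      _ = ∫ x in A, |f x - c| := by field_simp
  linarith

lemma int_abs_sub_avgB_le (hAB : A ⊆ B) (hB0 : volume B ≠ 0) (hBt : volume B ≠ ⊤)
    (hfB : IntegrableOn f B) :
    ∫ x in A, |f x - ⨍ y in B, f y| ≤ (volume B).toReal * oscN f B := by
  rw [mul_oscN hB0 hBt]
  refine setIntegral_mono_set ((hfB.sub (integrableOn_const hBt)).abs) ?_
    (HasSubset.Subset.eventuallyLE hAB)
  exact Eventually.of_forall fun x => abs_nonneg _

lemma abs_avg_sub_avg_le {ρ : ℝ} (hAB : A ⊆ B) (hA0 : volume A ≠ 0) (hB0 : volume B ≠ 0)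
    (hBt : volume B ≠ ⊤) (hfB : IntegrableOn f B)
    (hρ : (volume B).toReal ≤ ρ * (volume A).toReal) :
    |(⨍ y in A, f y) - ⨍ y in B, f y| ≤ ρ * oscN f B := by
  have hAt : volume A ≠ ⊤ := fun h => hBt (top_le_iff.1 (h ▸ measure_mono hAB))
  have hvA : 0 < (volume A).toReal := ENNReal.toReal_pos hA0 hAt
  have h1 := abs_avg_sub_const_le hA0 hAt (hfB.mono_set hAB) (⨍ y in B, f y)
  have h2 := int_abs_sub_avgB_le hAB hB0 hBt hfB
  calc |(⨍ y in A, f y) - ⨍ y in B, f y|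
      ≤ ((volume A).toReal)⁻¹ * ∫ x in A, |f x - ⨍ y in B, f y| := h1
    _ ≤ ((volume A).toReal)⁻¹ * ((volume B).toReal * oscN f B) := by gcongr
    _ ≤ ((volume A).toReal)⁻¹ * ((ρ * (volume A).toReal) * oscN f B) := by
        gcongr; exact oscN_nonneg
    _ = ρ * oscN f B := by field_simp

lemma oscN_le_of_subset {ρ : ℝ} (hAB : A ⊆ B) (hA0 : volume A ≠ 0) (hB0 : volume B ≠ 0)
    (hBt : volume B ≠ ⊤) (hfB : IntegrableOn f B)
    (hρ : (volume B).toReal ≤ ρ * (volume A).toReal) :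
    oscN f A ≤ 2 * ρ * oscN f B := by
  have hAt : volume A ≠ ⊤ := fun h => hBt (top_le_iff.1 (h ▸ measure_mono hAB))
  have hvA : 0 < (volume A).toReal := ENNReal.toReal_pos hA0 hAt
  have h1 := int_abs_le_two hA0 hAt (hfB.mono_set hAB) (⨍ y in B, f y)
  have h2 := int_abs_sub_avgB_le hAB hB0 hBt hfB
  rw [oscN_eq]
  calc ((volume A).toReal)⁻¹ * ∫ x in A, |f x - ⨍ y in A, f y|
      ≤ ((volume A).toReal)⁻¹ * (2 * ∫ x in A, |f x - ⨍ y in B, f y|) := by gcongr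
    _ ≤ ((volume A).toReal)⁻¹ * (2 * ((volume B).toReal * oscN f B)) := by gcongr
    _ ≤ ((volume A).toReal)⁻¹ * (2 * ((ρ * (volume A).toReal) * oscN f B)) := by
        gcongr; exact oscN_nonneg
    _ = 2 * ρ * oscN f B := by field_simp

lemma oscN_cube_le (hB : bmoN f ≠ ⊤) (p : Fin n → ℝ) {l : ℝ} (hl : 0 < l) :
    oscN f (Set.Icc p (fun i => p i + l)) ≤ (bmoN f).toReal := by
  have h1 : ENNReal.ofReal (oscN f (cube p l)) ≤ bmoN f :=
    le_iSup_of_le p (le_iSup_of_le l (le_iSup_of_le hl le_rfl))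
  have h2 := ENNReal.toReal_mono hB h1
  rwa [ENNReal.toReal_ofReal oscN_nonneg] at h2

lemma abs_telescope (g : ℕ → ℝ) (K : ℝ) :
    ∀ m : ℕ, (∀ j, j < m → |g j - g (j + 1)| ≤ K) → |g 0 - g m| ≤ m * K
  | 0, _ => by simp
  | (m + 1), h => by
    have h1 := abs_telescope g K m (fun j hj => h j (hj.trans (Nat.lt_succ_self m)))
    have h2 := h m (Nat.lt_succ_self m)
    calc |g 0 - g (m + 1)| ≤ |g 0 - g m| + |g m - g (m + 1)| := abs_sub_le _ _ _
      _ ≤ m * K + K := add_le_add h1 h2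
      _ = (m + 1 : ℕ) * K := by push_cast; ring

lemma vol_Icc_ne_top (p q : Fin n → ℝ) : volume (Set.Icc p q) ≠ ⊤ :=
  (IsCompact.measure_lt_top isCompact_Icc).ne

lemma vol_Icc_ne_zero {p q : Fin n → ℝ} (h : ∀ i, p i < q i) : volume (Set.Icc p q) ≠ 0 := by
  rw [Real.volume_Icc_pi]
  rw [Finset.prod_ne_zero_iff]
  exact fun i _ => (ENNReal.ofReal_pos.2 (sub_pos.2 (h i))).ne'

lemma vol_Icc_toReal {p q : Fin n → ℝ} (h : ∀ i, p i ≤ q i) :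
    (volume (Set.Icc p q)).toReal = ∏ i, (q i - p i) :=
  Real.volume_Icc_pi_toReal h

set_option maxHeartbeats 1000000 in
/-- there is a dimensional constant `C(n)` such that for every locally
integrable `f` and every closed axis-parallel rectangle `R = Icc a b` (with `aᵢ < bᵢ`
for all `i`) of eccentricity `e(R)` (ratio of longest to shortest side), one has
`O(f, R) ≤ C(n) (1 + log e(R)) ‖f‖_{BMO(ℝⁿ)}`. -/
theorem osc_on_rectangle_le_eccentricity (n : ℕ) (hn : 1 ≤ n) :
    ∃ C : ℝ, 0 < C ∧
      ∀ (f : (Fin n → ℝ) → ℝ), LocallyIntegrable f volume →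
      ∀ a b : Fin n → ℝ, (∀ i, a i < b i) →
        ENNReal.ofReal (oscN f (Set.Icc a b)) ≤
          ENNReal.ofReal
            (C * (1 + Real.log ((⨆ i, (b i - a i)) / (⨅ i, (b i - a i))))) * bmoN f := by
  have hlog2_pos : (0:ℝ) < Real.log 2 := Real.log_pos (by norm_num)
  have hlog2_lt : Real.log 2 < 1 := by
    have := Real.log_two_lt_d9; linarith
  refine ⟨10 * 5 ^ n / Real.log 2, by positivity, ?_⟩
  intro f hf a b hab
  have hne : Nonempty (Fin n) := ⟨⟨0, hn⟩⟩
  set s := ⨅ i, (b i - a i) with hs_def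
  set L := ⨆ i, (b i - a i) with hL_def
  have hbddb : BddBelow (Set.range fun i => b i - a i) := (Set.finite_range _).bddBelow
  have hbdda : BddAbove (Set.range fun i => b i - a i) := (Set.finite_range _).bddAbove
  have hsd : ∀ i, s ≤ b i - a i := fun i => ciInf_le hbddb i
  have hdL : ∀ i, b i - a i ≤ L := fun i => le_ciSup hbdda i
  have hdpos : ∀ i, 0 < b i - a i := fun i => sub_pos.2 (hab i)
  obtain ⟨i0, hi0⟩ := Finite.exists_min fun i => b i - a i
  have hs_pos : 0 < s := lt_of_lt_of_le (hdpos i0) (le_ciInf hi0)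
  have hsL : s ≤ L := (hsd i0).trans (hdL i0)
  have hL_pos : 0 < L := lt_of_lt_of_le hs_pos hsL
  have he1 : (1:ℝ) ≤ L / s := (one_le_div hs_pos).2 hsL
  have hlog : 0 ≤ Real.log (L / s) := Real.log_nonneg he1
  have hC1 : 0 < 10 * 5 ^ n / Real.log 2 * (1 + Real.log (L / s)) := by positivity
  rcases eq_or_ne (bmoN f) ⊤ with hB | hB
  · rw [hB, ENNReal.mul_top (by rw [Ne, ENNReal.ofReal_eq_zero, not_le]; exact hC1)]
    exact le_top
  set M := (bmoN f).toReal with hM_def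
  have hM0 : 0 ≤ M := ENNReal.toReal_nonneg
  -- subdivision parameters
  set N : Fin n → ℕ := fun i => ⌈(b i - a i) / s⌉₊ with hN_def
  have hN_pos : ∀ i, 0 < N i := fun i => Nat.ceil_pos.2 (div_pos (hdpos i) hs_pos)
  have hN_cast : ∀ i, (0:ℝ) < N i := fun i => by exact_mod_cast hN_pos i
  set h : Fin n → ℝ := fun i => (b i - a i) / N i with hh_def
  have hh_pos : ∀ i, 0 < h i := fun i => div_pos (hdpos i) (hN_cast i)
  have hNh : ∀ i, (N i : ℝ) * h i = b i - a i := fun i => by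
    rw [hh_def]; field_simp
    exact mul_div_cancel_left₀ _ (hN_cast i).ne'
  have hh_le : ∀ i, h i ≤ s := by
    intro i
    rw [hh_def, div_le_iff₀ (hN_cast i)]
    have h1 : (b i - a i) / s ≤ N i := Nat.le_ceil _
    calc b i - a i = (b i - a i) / s * s := by field_simp
      _ ≤ N i * s := mul_le_mul_of_nonneg_right h1 hs_pos.le
      _ = s * N i := mul_comm _ _
  have hh_half : ∀ i, s ≤ 2 * h i := by
    intro i
    have h1 : (N i : ℝ) < (b i - a i) / s + 1 :=
      Nat.ceil_lt_add_one (div_nonneg (hdpos i).le hs_pos.le)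
    have h2 : (1:ℝ) ≤ (b i - a i) / s := (one_le_div hs_pos).2 (hsd i)
    have h3 : (N i : ℝ) * s < 2 * (b i - a i) := by
      have : (N i : ℝ) < 2 * ((b i - a i) / s) := by linarith
      calc (N i : ℝ) * s < 2 * ((b i - a i) / s) * s := by
            exact mul_lt_mul_of_pos_right this hs_pos
        _ = 2 * (b i - a i) := by field_simp
    rw [hh_def, ← mul_div_assoc, le_div_iff₀ (hN_cast i)]
    nlinarith
  -- number of doubling steps
  set m := ⌈Real.logb 2 (L / s)⌉₊ with hm_def
  have hm1 : L ≤ 2 ^ m * s := by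
    have h1 : Real.logb 2 (L / s) ≤ (m : ℝ) := Nat.le_ceil _
    have h2 : L / s ≤ 2 ^ (m : ℝ) := by
      calc L / s = 2 ^ Real.logb 2 (L / s) :=
            (Real.rpow_logb (by norm_num) (by norm_num) (by positivity)).symm
        _ ≤ 2 ^ (m:ℝ) := Real.rpow_le_rpow_of_exponent_le (by norm_num) h1
    rw [Real.rpow_natCast] at h2
    calc L = L / s * s := by field_simp
      _ ≤ 2 ^ m * s := mul_le_mul_of_nonneg_right h2 hs_pos.le
  have hm2 : (2:ℝ) ^ m * s ≤ 2 * L := by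
    rcases Nat.eq_zero_or_pos m with h0 | h0
    · rw [h0]; simp; linarith
    · have hle : (m:ℝ) - 1 < Real.logb 2 (L / s) := by
        by_contra hcon
        push_neg at hcon
        have hle2 : Real.logb 2 (L / s) ≤ ((m - 1 : ℕ) : ℝ) := by
          rwa [Nat.cast_sub h0, Nat.cast_one]
        have : m ≤ m - 1 := Nat.ceil_le.2 hle2
        omega
      have h2 : (2:ℝ) ^ ((m:ℝ) - 1) < L / s := by
        calc (2:ℝ) ^ ((m:ℝ) - 1) < 2 ^ Real.logb 2 (L / s) :=
              Real.rpow_lt_rpow_of_exponent_lt (by norm_num) hle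
          _ = L / s := Real.rpow_logb (by norm_num) (by norm_num) (by positivity)
      have h3 : (2:ℝ) ^ (m:ℝ) < 2 * (L / s) := by
        have e := Real.rpow_add (show (0:ℝ) < 2 by norm_num) ((m:ℝ) - 1) 1
        rw [Real.rpow_one, show ((m:ℝ) - 1) + 1 = (m:ℝ) by ring] at e
        rw [e]; linarith
      rw [← Real.rpow_natCast 2 m]
      calc (2:ℝ) ^ (m:ℝ) * s ≤ 2 * (L / s) * s := by nlinarith
        _ = 2 * L := by field_simp
  have hmlog : (m : ℝ) * Real.log 2 ≤ Real.log (L / s) + Real.log 2 := by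
    have h1 : (m : ℝ) < Real.logb 2 (L / s) + 1 :=
      Nat.ceil_lt_add_one (Real.logb_nonneg (by norm_num) he1)
    have h2 : Real.logb 2 (L / s) = Real.log (L / s) / Real.log 2 := rfl
    rw [h2] at h1
    have := mul_le_mul_of_nonneg_right h1.le hlog2_pos.le
    rw [add_mul, div_mul_cancel₀ _ hlog2_pos.ne', one_mul] at this
    exact this
  -- the big reference cube
  set q : Fin n → ℝ := fun i => a i - 2 * L with hq_def
  set Qs : Set (Fin n → ℝ) := Set.Icc q (fun i => q i + 5 * L) with hQs_def
  have hQs_osc : oscN f Qs ≤ M := oscN_cube_le hB q (by positivity)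
  have hfQs : IntegrableOn f Qs := hf.integrableOn_isCompact isCompact_Icc
  have hQs0 : volume Qs ≠ 0 := vol_Icc_ne_zero (fun i => by linarith)
  have hQst : volume Qs ≠ ⊤ := vol_Icc_ne_top _ _
  have hQs_vol : (volume Qs).toReal = (5 * L) ^ n := by
    rw [hQs_def, vol_Icc_toReal (fun i => by linarith)]
    rw [show (∏ i, (q i + 5 * L - q i)) = ∏ _i : Fin n, 5 * L from
      Finset.prod_congr rfl fun i _ => by ring]
    rw [Finset.prod_const, Finset.card_univ, Fintype.card_fin]
  set c := ⨍ y in Qs, f y with hc_def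
  -- cells
  set cl : (∀ i, Fin (N i)) → Fin n → ℝ := fun k i => a i + (k i : ℝ) * h i with hcl_def
  set ch : (∀ i, Fin (N i)) → Fin n → ℝ := fun k i => a i + ((k i : ℝ) + 1) * h i with hch_def
  have hclch : ∀ k i, cl k i < ch k i := fun k i => by
    simp only [hcl_def, hch_def]; nlinarith [hh_pos i]
  have hchcl : ∀ k i, ch k i = cl k i + h i := fun k i => by
    simp only [hcl_def, hch_def]; ring
  have hcl_a : ∀ k i, a i ≤ cl k i := fun k i =>
    le_add_of_nonneg_right (mul_nonneg (Nat.cast_nonneg _) (hh_pos i).le)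
  have hch_b : ∀ k i, ch k i ≤ b i := by
    intro k i
    have hk : (k i : ℝ) + 1 ≤ N i := by exact_mod_cast (k i).2
    calc ch k i = a i + ((k i : ℝ) + 1) * h i := rfl
      _ ≤ a i + (N i : ℝ) * h i := by nlinarith [hh_pos i]
      _ = b i := by rw [hNh i]; ring
  have hcl_b : ∀ k i, cl k i ≤ b i := fun k i => (hclch k i).le.trans (hch_b k i)
  set cell : (∀ i, Fin (N i)) → Set (Fin n → ℝ) :=
    fun k => Set.pi Set.univ fun i => Set.Ico (cl k i) (ch k i) with hcell_def
  have hcell_meas : ∀ k, MeasurableSet (cell k) :=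
    fun k => MeasurableSet.univ_pi fun i => measurableSet_Ico
  have hcell_sub : ∀ k, cell k ⊆ Set.Icc (cl k) (ch k) := fun k => by
    rw [← Set.pi_univ_Icc]; exact Set.pi_mono fun i _ => Set.Ico_subset_Icc_self
  have hcell_ae : ∀ k, cell k =ᵐ[volume] Set.Icc (cl k) (ch k) := fun k => by
    rw [MeasureTheory.volume_pi]
    exact MeasureTheory.Measure.univ_pi_Ico_ae_eq_Icc
  have hunion : (⋃ k, cell k) = Set.pi Set.univ fun i => Set.Ico (a i) (b i) := by
    ext x
    simp only [Set.mem_iUnion, Set.mem_pi, Set.mem_univ, true_implies, Set.mem_Ico, hcell_def]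
    constructor
    · rintro ⟨k, hk⟩ i
      obtain ⟨h1, h2⟩ := hk i
      exact ⟨(hcl_a k i).trans h1, lt_of_lt_of_le h2 (hch_b k i)⟩
    · intro hx
      have hge : ∀ i, 0 ≤ (x i - a i) / h i :=
        fun i => div_nonneg (by linarith [(hx i).1]) (hh_pos i).le
      refine ⟨fun i => ⟨⌊(x i - a i) / h i⌋₊, ?_⟩, fun i => ⟨?_, ?_⟩⟩
      · rw [Nat.floor_lt (hge i), div_lt_iff₀ (hh_pos i)]
        calc x i - a i < b i - a i := by linarith [(hx i).2]
          _ = N i * h i := (hNh i).symm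
      · have h1 : (⌊(x i - a i) / h i⌋₊ : ℝ) ≤ (x i - a i) / h i := Nat.floor_le (hge i)
        have h2 := mul_le_mul_of_nonneg_right h1 (hh_pos i).le
        rw [div_mul_cancel₀ _ (hh_pos i).ne'] at h2
        simp only [hcl_def, Fin.val_mk]; linarith [h2]
      · have h1 : (x i - a i) / h i < ⌊(x i - a i) / h i⌋₊ + 1 := Nat.lt_floor_add_one _
        have h2 := mul_lt_mul_of_pos_right h1 (hh_pos i)
        rw [div_mul_cancel₀ _ (hh_pos i).ne'] at h2
        simp only [hch_def, Fin.val_mk]; linarith [h2]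
  have hdisj : Pairwise (Function.onFun Disjoint cell) := by
    intro k k' hkk
    have hex : ∃ i, k i ≠ k' i := by
      by_contra hc; push_neg at hc; exact hkk (funext hc)
    obtain ⟨i, hi⟩ := hex
    rw [Function.onFun, Set.disjoint_left]
    intro x hx hx'
    have h1 := hx i (Set.mem_univ i)
    have h2 := hx' i (Set.mem_univ i)
    simp only [Set.mem_Ico] at h1 h2
    have hvi : (k i : ℕ) ≠ (k' i : ℕ) := fun hh => hi (Fin.ext hh)
    rcases hvi.lt_or_gt with hlt | hlt
    · have hc : (k i : ℝ) + 1 ≤ (k' i : ℝ) := by exact_mod_cast hlt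
      have := mul_le_mul_of_nonneg_right hc (hh_pos i).le
      simp only [hcl_def, hch_def] at h1 h2
      linarith [h1.2, h2.1]
    · have hc : (k' i : ℝ) + 1 ≤ (k i : ℝ) := by exact_mod_cast hlt
      have := mul_le_mul_of_nonneg_right hc (hh_pos i).le
      simp only [hcl_def, hch_def] at h1 h2
      linarith [h1.1, h2.2]
  -- cell volumes
  have hcellc_vol : ∀ k, (volume (Set.Icc (cl k) (ch k))).toReal = ∏ i, h i := by
    intro k
    rw [vol_Icc_toReal (fun i => (hclch k i).le)]
    exact Finset.prod_congr rfl fun i _ => by simp only [hcl_def, hch_def]; ring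
  have hcellc0 : ∀ k, volume (Set.Icc (cl k) (ch k)) ≠ 0 := fun k => vol_Icc_ne_zero (hclch k)
  have hcellct : ∀ k, volume (Set.Icc (cl k) (ch k)) ≠ ⊤ := fun k => vol_Icc_ne_top _ _
  -- chain of cubes
  set Cc : (∀ i, Fin (N i)) → ℕ → Set (Fin n → ℝ) := fun k j =>
    Set.Icc (fun i => cl k i - ((2:ℝ) ^ j - 1) * s)
      (fun i => (cl k i - ((2:ℝ) ^ j - 1) * s) + ((2:ℝ) ^ (j+1) - 1) * s) with hCc_def
  have hside_pos : ∀ j : ℕ, (0:ℝ) < ((2:ℝ) ^ (j+1) - 1) * s := by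
    intro j
    have : (1:ℝ) < 2 ^ (j+1) := one_lt_pow₀ (by norm_num) (Nat.succ_ne_zero j)
    nlinarith
  have hCc_osc : ∀ k j, oscN f (Cc k j) ≤ M := fun k j => oscN_cube_le hB _ (hside_pos j)
  have hCc_f : ∀ k j, IntegrableOn f (Cc k j) := fun k j => hf.integrableOn_isCompact isCompact_Icc
  have hCc0 : ∀ k j, volume (Cc k j) ≠ 0 := fun k j =>
    vol_Icc_ne_zero (fun i => by linarith [hside_pos j])
  have hCct : ∀ k j, volume (Cc k j) ≠ ⊤ := fun k j => vol_Icc_ne_top _ _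
  have hCc_vol : ∀ k j, (volume (Cc k j)).toReal = (((2:ℝ) ^ (j+1) - 1) * s) ^ n := by
    intro k j
    rw [vol_Icc_toReal (fun i => by linarith [hside_pos j])]
    rw [show (∏ i, ((cl k i - ((2:ℝ)^j - 1) * s) + ((2:ℝ)^(j+1) - 1) * s
        - (cl k i - ((2:ℝ)^j - 1) * s))) = ∏ _i : Fin n, ((2:ℝ)^(j+1) - 1) * s from
      Finset.prod_congr rfl fun i _ => by ring]
    rw [Finset.prod_const, Finset.card_univ, Fintype.card_fin]
  have hCc_sub : ∀ k j, Cc k j ⊆ Cc k (j+1) := by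
    intro k j
    have p1 : (2:ℝ) ^ j ≤ 2 ^ (j+1) := by
      apply pow_le_pow_right₀ (by norm_num); omega
    have p2 : (2:ℝ) ^ (j+1) ≤ 2 ^ (j+2) := by
      apply pow_le_pow_right₀ (by norm_num); omega
    apply Set.Icc_subset_Icc
    · intro i
      beta_reduce
      nlinarith [hs_pos.le, mul_nonneg (sub_nonneg.2 p1) hs_pos.le]
    · intro i
      beta_reduce
      have ey : (2:ℝ) ^ (j+1) = 2 * 2 ^ j := by ring
      have ez : (2:ℝ) ^ (j+1+1) = 4 * 2 ^ j := by ring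
      rw [ey, ez]
      nlinarith [mul_nonneg (pow_nonneg (by norm_num : (0:ℝ) ≤ 2) j) hs_pos.le]
  have hcell_Cc0 : ∀ k, Set.Icc (cl k) (ch k) ⊆ Cc k 0 := by
    intro k
    apply Set.Icc_subset_Icc
    · intro i
      norm_num
    · intro i
      rw [hchcl]
      have := hh_le i
      norm_num
      linarith
  have hCm_Qs : ∀ k, Cc k m ⊆ Qs := by
    intro k
    apply Set.Icc_subset_Icc
    · intro i
      simp only [hq_def]
      have h1 := hcl_a k i
      have h2 : ((2:ℝ) ^ m - 1) * s ≤ 2 * L := by nlinarith [hs_pos.le]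
      linarith
    · intro i
      simp only [hq_def]
      have h1 := hcl_b k i
      have h2 := hdL i
      have h3 : (2:ℝ) ^ m * s ≤ 2 * L := hm2
      have e1 : (cl k i - ((2:ℝ)^m - 1) * s) + ((2:ℝ)^(m+1) - 1) * s
          = cl k i + (2:ℝ)^m * s := by ring
      rw [e1]
      linarith
  -- volume ratios
  have hρ0 : ∀ k, (volume (Cc k 0)).toReal ≤ 2 ^ n * (volume (Set.Icc (cl k) (ch k))).toReal := by
    intro k
    rw [hCc_vol, hcellc_vol]
    have hp : ∏ _i : Fin n, (s/2) ≤ ∏ i, h i :=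
      Finset.prod_le_prod (fun _ _ => by linarith) (fun i _ => by linarith [hh_half i])
    calc (((2:ℝ) ^ (0+1) - 1) * s) ^ n = s ^ n := by norm_num
      _ = 2 ^ n * (s/2) ^ n := by rw [div_pow]; field_simp
      _ = 2 ^ n * ∏ _i : Fin n, (s/2) := by
          rw [Finset.prod_const, Finset.card_univ, Fintype.card_fin]
      _ ≤ 2 ^ n * ∏ i, h i := by
          exact mul_le_mul_of_nonneg_left hp (by positivity)
  have hρstep : ∀ k j, (volume (Cc k (j+1))).toReal ≤ 3 ^ n * (volume (Cc k j)).toReal := by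
    intro k j
    rw [hCc_vol, hCc_vol, ← mul_pow]
    apply pow_le_pow_left₀ (hside_pos (j+1)).le
    have p1 : (2:ℝ) ≤ 2 ^ (j+1) := by
      calc (2:ℝ) = 2 ^ 1 := (pow_one 2).symm
        _ ≤ 2 ^ (j+1) := by apply pow_le_pow_right₀ (by norm_num); omega
    have e2 : (2:ℝ) ^ (j+2) = 2 * 2 ^ (j+1) := by ring
    nlinarith [hs_pos.le]
  have hρm : ∀ k, (volume Qs).toReal ≤ 5 ^ n * (volume (Cc k m)).toReal := by
    intro k
    rw [hQs_vol, hCc_vol, ← mul_pow]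
    apply pow_le_pow_left₀ (mul_nonneg (by norm_num) hL_pos.le)
    have e1 : (2:ℝ) ^ (m+1) = 2 * 2 ^ m := by ring
    nlinarith [hm1, hs_pos.le, hL_pos.le]
  -- the chain estimate
  have hchain : ∀ k, |(⨍ y in Set.Icc (cl k) (ch k), f y) - c| ≤ (2^n + m * 3^n + 5^n) * M := by
    intro k
    have t1 : |(⨍ y in Set.Icc (cl k) (ch k), f y) - ⨍ y in Cc k 0, f y| ≤ 2^n * M :=
      (abs_avg_sub_avg_le (hcell_Cc0 k) (hcellc0 k) (hCc0 k 0) (hCct k 0) (hCc_f k 0)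
        (hρ0 k)).trans (mul_le_mul_of_nonneg_left (hCc_osc k 0) (by positivity))
    have t2 : |(⨍ y in Cc k 0, f y) - ⨍ y in Cc k m, f y| ≤ m * (3^n * M) := by
      apply abs_telescope (fun j => ⨍ y in Cc k j, f y) (3^n * M) m
      intro j _
      exact (abs_avg_sub_avg_le (hCc_sub k j) (hCc0 k j) (hCc0 k (j+1)) (hCct k (j+1))
        (hCc_f k (j+1)) (hρstep k j)).trans
        (mul_le_mul_of_nonneg_left (hCc_osc k (j+1)) (by positivity))
    have t3 : |(⨍ y in Cc k m, f y) - c| ≤ 5^n * M :=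
      (abs_avg_sub_avg_le (hCm_Qs k) (hCc0 k m) hQs0 hQst hfQs (hρm k)).trans
        (mul_le_mul_of_nonneg_left hQs_osc (by positivity))
    have u1 := abs_sub_le (⨍ y in Set.Icc (cl k) (ch k), f y) (⨍ y in Cc k 0, f y) c
    have u2 := abs_sub_le (⨍ y in Cc k 0, f y) (⨍ y in Cc k m, f y) c
    calc |(⨍ y in Set.Icc (cl k) (ch k), f y) - c|
        ≤ 2^n * M + (m * (3^n * M) + 5^n * M) := by linarith
      _ = (2^n + m * 3^n + 5^n) * M := by ring
  have hosc_cell : ∀ k, oscN f (Set.Icc (cl k) (ch k)) ≤ 2 * 2^n * M := by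
    intro k
    refine (oscN_le_of_subset (hcell_Cc0 k) (hcellc0 k) (hCc0 k 0) (hCct k 0) (hCc_f k 0)
      (hρ0 k)).trans ?_
    exact mul_le_mul_of_nonneg_left (hCc_osc k 0) (by positivity)
  -- the per-cell integral bound
  set W : ℝ := 2 * 2^n * M + (2^n + m * 3^n + 5^n) * M with hW_def
  have hcell_int : ∀ k, ∫ x in cell k, |f x - c| ≤ (volume (cell k)).toReal * W := by
    intro k
    have hfK : IntegrableOn f (Set.Icc (cl k) (ch k)) := hf.integrableOn_isCompact isCompact_Icc
    have e1 : ∫ x in cell k, |f x - c| = ∫ x in Set.Icc (cl k) (ch k), |f x - c| :=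
      setIntegral_congr_set (hcell_ae k)
    have e2 : (volume (cell k)).toReal = (volume (Set.Icc (cl k) (ch k))).toReal := by
      rw [measure_congr (hcell_ae k)]
    rw [e1, e2]
    have hconst : IntegrableOn (fun _ => |(⨍ y in Set.Icc (cl k) (ch k), f y) - c|)
        (Set.Icc (cl k) (ch k)) := integrableOn_const (hcellct k)
    have habs1 : IntegrableOn (fun x => |f x - ⨍ y in Set.Icc (cl k) (ch k), f y|)
        (Set.Icc (cl k) (ch k)) :=
      (hfK.sub (integrableOn_const (hcellct k))).abs
    have habs2 : IntegrableOn (fun x => |f x - c|) (Set.Icc (cl k) (ch k)) :=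
      (hfK.sub (integrableOn_const (hcellct k))).abs
    have hvK : (0:ℝ) ≤ (volume (Set.Icc (cl k) (ch k))).toReal := ENNReal.toReal_nonneg
    calc ∫ x in Set.Icc (cl k) (ch k), |f x - c|
        ≤ ∫ x in Set.Icc (cl k) (ch k),
            (|f x - ⨍ y in Set.Icc (cl k) (ch k), f y|
              + |(⨍ y in Set.Icc (cl k) (ch k), f y) - c|) := by
          refine integral_mono habs2 (habs1.add hconst) ?_
          intro x
          exact abs_sub_le _ _ _
      _ = (volume (Set.Icc (cl k) (ch k))).toReal * oscN f (Set.Icc (cl k) (ch k))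
            + (volume (Set.Icc (cl k) (ch k))).toReal
              * |(⨍ y in Set.Icc (cl k) (ch k), f y) - c| := by
          rw [integral_add habs1 hconst, mul_oscN (hcellc0 k) (hcellct k), setIntegral_const,
            smul_eq_mul]
          rfl
      _ ≤ (volume (Set.Icc (cl k) (ch k))).toReal * (2 * 2^n * M)
            + (volume (Set.Icc (cl k) (ch k))).toReal * ((2^n + m * 3^n + 5^n) * M) :=
          add_le_add (mul_le_mul_of_nonneg_left (hosc_cell k) hvK)
            (mul_le_mul_of_nonneg_left (hchain k) hvK)
      _ = (volume (Set.Icc (cl k) (ch k))).toReal * W := by rw [hW_def]; ring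
  -- summing over the cells
  have hae_R : (Set.pi Set.univ fun i => Set.Ico (a i) (b i)) =ᵐ[volume] Set.Icc a b := by
    rw [MeasureTheory.volume_pi]
    exact MeasureTheory.Measure.univ_pi_Ico_ae_eq_Icc
  have hvR0 : volume (Set.Icc a b) = ∑ k, volume (cell k) := by
    rw [← measure_congr hae_R, ← hunion, measure_iUnion hdisj hcell_meas, tsum_fintype]
  have hfR : IntegrableOn f (Set.Icc a b) := hf.integrableOn_isCompact isCompact_Icc
  have hRt : volume (Set.Icc a b) ≠ ⊤ := vol_Icc_ne_top a b
  have hR0 : volume (Set.Icc a b) ≠ 0 := vol_Icc_ne_zero hab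
  have habsR : IntegrableOn (fun x => |f x - c|) (Set.Icc a b) :=
    (hfR.sub (integrableOn_const hRt)).abs
  have hIsum : ∫ x in Set.Icc a b, |f x - c| ≤ (volume (Set.Icc a b)).toReal * W := by
    have hint_cell : ∀ k, IntegrableOn (fun x => |f x - c|) (cell k) := by
      intro k
      have hfK : IntegrableOn f (Set.Icc (cl k) (ch k)) := hf.integrableOn_isCompact isCompact_Icc
      exact MeasureTheory.IntegrableOn.mono_set
        ((hfK.sub (integrableOn_const (hcellct k))).abs) (hcell_sub k)
    calc ∫ x in Set.Icc a b, |f x - c|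
        = ∫ x in (Set.pi Set.univ fun i => Set.Ico (a i) (b i)), |f x - c| :=
          (setIntegral_congr_set hae_R).symm
      _ = ∑ k, ∫ x in cell k, |f x - c| := by
          rw [← hunion]
          exact integral_iUnion_fintype hcell_meas hdisj hint_cell
      _ ≤ ∑ k, (volume (cell k)).toReal * W := Finset.sum_le_sum fun k _ => hcell_int k
      _ = (∑ k, (volume (cell k)).toReal) * W := by rw [Finset.sum_mul]
      _ = (volume (Set.Icc a b)).toReal * W := by
          congr 1
          rw [hvR0, ENNReal.toReal_sum]
          intro k _
          exact ((measure_mono (hcell_sub k)).trans_lt (hcellct k).lt_top).ne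
  have hvRpos : 0 < (volume (Set.Icc a b)).toReal := ENNReal.toReal_pos hR0 hRt
  have hosc_R : oscN f (Set.Icc a b) ≤ 2 * W := by
    rw [oscN_eq]
    calc ((volume (Set.Icc a b)).toReal)⁻¹ * ∫ x in Set.Icc a b, |f x - ⨍ y in Set.Icc a b, f y|
        ≤ ((volume (Set.Icc a b)).toReal)⁻¹ * (2 * ∫ x in Set.Icc a b, |f x - c|) := by
          apply mul_le_mul_of_nonneg_left (int_abs_le_two hR0 hRt hfR c)
          positivity
      _ ≤ ((volume (Set.Icc a b)).toReal)⁻¹ * (2 * ((volume (Set.Icc a b)).toReal * W)) := by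
          apply mul_le_mul_of_nonneg_left _ (by positivity)
          linarith [hIsum]
      _ = 2 * W := by field_simp
  -- final numeric bound
  have key : oscN f (Set.Icc a b) ≤ 10 * 5 ^ n / Real.log 2 * (1 + Real.log (L / s)) * M := by
    refine hosc_R.trans ?_
    rw [← mul_le_mul_iff_right₀ hlog2_pos]
    have e1 : Real.log 2 * (10 * 5 ^ n / Real.log 2 * (1 + Real.log (L / s)) * M)
        = 10 * 5 ^ n * (1 + Real.log (L / s)) * M := by field_simp
    rw [e1, hW_def]
    have h2n : (2:ℝ)^n ≤ 5^n := pow_le_pow_left₀ (by norm_num) (by norm_num) n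
    have h3n : (3:ℝ)^n ≤ 5^n := pow_le_pow_left₀ (by norm_num) (by norm_num) n
    have h5n : (0:ℝ) < 5^n := by positivity
    have hmM : (m:ℝ) * Real.log 2 * M ≤ (Real.log (L / s) + Real.log 2) * M :=
      mul_le_mul_of_nonneg_right hmlog hM0
    have hMl : 0 ≤ M * Real.log (L / s) := mul_nonneg hM0 hlog
    nlinarith [mul_nonneg hM0 hlog2_pos.le, mul_nonneg (mul_nonneg hM0 hlog) h5n.le,
      mul_nonneg hM0 h5n.le, mul_le_mul_of_nonneg_right h2n hM0,
      mul_le_mul_of_nonneg_right h3n (mul_nonneg (Nat.cast_nonneg m) hM0),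
      mul_nonneg (mul_nonneg hM0 hlog2_pos.le) h5n.le]
  calc ENNReal.ofReal (oscN f (Set.Icc a b))
      ≤ ENNReal.ofReal (10 * 5 ^ n / Real.log 2 * (1 + Real.log (L / s)) * M) :=
        ENNReal.ofReal_le_ofReal key
    _ = ENNReal.ofReal (10 * 5 ^ n / Real.log 2 * (1 + Real.log (L / s)))
          * ENNReal.ofReal M := ENNReal.ofReal_mul hC1.le
    _ = ENNReal.ofReal (10 * 5 ^ n / Real.log 2 * (1 + Real.log (L / s))) * bmoN f := by
        rw [hM_def, ENNReal.ofReal_toReal hB]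
end
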